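/- arXiv:0905.4318 — 4 statements merged into one kernel-verified Lean document; each statement's English description precedes it below -/
import Mathlib

section
/- Let Q = ℝᵈ and L : Q × Q → ℝ be C², and suppose F⁻L(q₀,q₁) = (q₀, -D₁L(q₀,q₁)) is a C¹ diffeomorphism of Q × Q onto Q × Q*. Then the one-step map Φ = F⁺L ∘ (F⁻L)⁻¹ : Q × Q* → Q × Q* is symplectic: it preserves the canonical symplectic form ω = ∑ dqⁱ ∧ dpᵢ, i.e., for all z ∈ Q × Q* and tangent vectors u, v, ω(DΦ(z)u, DΦ(z)v) = ω(u, v). -/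
noncomputable def D1 {Q : Type*} [NormedAddCommGroup Q] [NormedSpace ℝ Q]
    (L : Q × Q → ℝ) (a b : Q) : Q →L[ℝ] ℝ :=
  fderiv ℝ (fun x => L (x, b)) a

noncomputable def D2 {Q : Type*} [NormedAddCommGroup Q] [NormedSpace ℝ Q]
    (L : Q × Q → ℝ) (a b : Q) : Q →L[ℝ] ℝ :=
  fderiv ℝ (fun y => L (a, y)) b

noncomputable def Fminus {Q : Type*} [NormedAddCommGroup Q] [NormedSpace ℝ Q]
    (L : Q × Q → ℝ) (z : Q × Q) : Q × (Q →L[ℝ] ℝ) :=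
  (z.1, -D1 L z.1 z.2)

noncomputable def Fplus {Q : Type*} [NormedAddCommGroup Q] [NormedSpace ℝ Q]
    (L : Q × Q → ℝ) (z : Q × Q) : Q × (Q →L[ℝ] ℝ) :=
  (z.2, D2 L z.1 z.2)

/-- The canonical symplectic bilinear form on Q × Q*:
ω((a,α),(b,β)) = α(b) - β(a). -/
noncomputable def symplForm {Q : Type*} [NormedAddCommGroup Q] [NormedSpace ℝ Q]
    (u v : Q × (Q →L[ℝ] ℝ)) : ℝ :=
  u.2 v.1 - v.2 u.1

section Aux

variable {E : Type*} [NormedAddCommGroup E] [NormedSpace ℝ E]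

/-- Precomposition with `inl` as a continuous linear map. -/
noncomputable def precompInl : ((E × E) →L[ℝ] ℝ) →L[ℝ] (E →L[ℝ] ℝ) :=
  (ContinuousLinearMap.compL ℝ E (E × E) ℝ).flip (ContinuousLinearMap.inl ℝ E E)

/-- Precomposition with `inr` as a continuous linear map. -/
noncomputable def precompInr : ((E × E) →L[ℝ] ℝ) →L[ℝ] (E →L[ℝ] ℝ) :=
  (ContinuousLinearMap.compL ℝ E (E × E) ℝ).flip (ContinuousLinearMap.inr ℝ E E)

@[simp] lemma precompInl_apply (φ : (E × E) →L[ℝ] ℝ) (x : E) :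
    precompInl φ x = φ (x, 0) := rfl

@[simp] lemma precompInr_apply (φ : (E × E) →L[ℝ] ℝ) (x : E) :
    precompInr φ x = φ (0, x) := rfl

lemma D1_eq (L : E × E → ℝ) (hL : ContDiff ℝ 2 L) (a b : E) :
    D1 L a b = precompInl (fderiv ℝ L (a, b)) := by
  have h : HasFDerivAt L (fderiv ℝ L (a, b)) (a, b) :=
    ((hL.differentiable two_ne_zero) (a, b)).hasFDerivAt
  have h2 := h.comp (𝕜 := ℝ) a (hasFDerivAt_prodMk_left a b)
  exact h2.fderiv

lemma D2_eq (L : E × E → ℝ) (hL : ContDiff ℝ 2 L) (a b : E) :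
    D2 L a b = precompInr (fderiv ℝ L (a, b)) := by
  have h : HasFDerivAt L (fderiv ℝ L (a, b)) (a, b) :=
    ((hL.differentiable two_ne_zero) (a, b)).hasFDerivAt
  have h2 := h.comp b (hasFDerivAt_prodMk_right a b)
  exact h2.fderiv

/-- Derivative of `Fminus`. -/
lemma hasFDerivAt_Fminus (L : E × E → ℝ) (hL : ContDiff ℝ 2 L) (w : E × E) :
    HasFDerivAt (Fminus L)
      ((ContinuousLinearMap.fst ℝ E E).prod
        (-(precompInl.comp (fderiv ℝ (fderiv ℝ L) w)))) w := by
  have hf' : HasFDerivAt (fderiv ℝ L) (fderiv ℝ (fderiv ℝ L) w) w :=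
    (((hL.fderiv_right (m := 1) (by norm_num)).differentiable one_ne_zero) w).hasFDerivAt
  have h2 : HasFDerivAt (fun z : E × E => -(precompInl (fderiv ℝ L z)))
      (-(precompInl.comp (fderiv ℝ (fderiv ℝ L) w))) w :=
    ((precompInl.hasFDerivAt.comp w hf')).neg
  have heq : Fminus L = fun z : E × E => (z.1, -(precompInl (fderiv ℝ L z))) := by
    funext z
    simp [Fminus, D1_eq L hL z.1 z.2]
  rw [heq]
  exact HasFDerivAt.prodMk hasFDerivAt_fst h2

/-- Derivative of `Fplus`. -/
lemma hasFDerivAt_Fplus (L : E × E → ℝ) (hL : ContDiff ℝ 2 L) (w : E × E) :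
    HasFDerivAt (Fplus L)
      ((ContinuousLinearMap.snd ℝ E E).prod
        (precompInr.comp (fderiv ℝ (fderiv ℝ L) w))) w := by
  have hf' : HasFDerivAt (fderiv ℝ L) (fderiv ℝ (fderiv ℝ L) w) w :=
    (((hL.fderiv_right (m := 1) (by norm_num)).differentiable one_ne_zero) w).hasFDerivAt
  have h2 := (ContinuousLinearMap.hasFDerivAt (precompInr (E := E))).comp w hf'
  have heq : Fplus L = fun z : E × E => (z.2, precompInr (fderiv ℝ L z)) := by
    funext z
    simp [Fplus, D2_eq L hL z.1 z.2]
  rw [heq]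
  exact HasFDerivAt.prodMk hasFDerivAt_snd h2

end Aux

/-- The one-step map Φ = F⁺L ∘ (F⁻L)⁻¹ is symplectic. -/
theorem one_step_map_symplectic
    (d : ℕ) (L : (Fin d → ℝ) × (Fin d → ℝ) → ℝ) (hL : ContDiff ℝ 2 L)
    (hbij : Function.Bijective (Fminus L))
    (hinv : ContDiff ℝ 1 (Function.invFun (Fminus L))) :
    ∀ (z : (Fin d → ℝ) × ((Fin d → ℝ) →L[ℝ] ℝ))
      (u v : (Fin d → ℝ) × ((Fin d → ℝ) →L[ℝ] ℝ)),
      symplForm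
        (fderiv ℝ (Fplus L ∘ Function.invFun (Fminus L)) z u)
        (fderiv ℝ (Fplus L ∘ Function.invFun (Fminus L)) z v)
        = symplForm u v := by
  intro z u v
  set ψ := Function.invFun (Fminus L) with hψdef
  let Q := Fin d → ℝ
  set w := ψ z with hwdef
  -- second derivative of L at w, as a bilinear object
  set B := fderiv ℝ (fderiv ℝ L) w with hBdef
  have hsymm : ∀ a b : Q × Q, B a b = B b a := fun a b =>
    (hL.contDiffAt.isSymmSndFDerivAt (by simp [minSmoothness_of_isRCLikeNormedField])) a b
  -- differentiability of ψ
  have hψdiff : DifferentiableAt ℝ ψ z := (hinv.differentiable one_ne_zero) z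
  set Dψ := fderiv ℝ ψ z with hDψ
  -- derivatives of Fplus and Fminus at w
  have hFp := hasFDerivAt_Fplus L hL w
  have hFm := hasFDerivAt_Fminus L hL w
  set Ap := (ContinuousLinearMap.snd ℝ Q Q).prod (precompInr.comp B) with hApdef
  set Am := (ContinuousLinearMap.fst ℝ Q Q).prod (-(precompInl.comp B)) with hAmdef
  -- chain rule for Φ
  have hcomp : fderiv ℝ (Fplus L ∘ ψ) z = Ap.comp Dψ :=
    (hFp.comp z hψdiff.hasFDerivAt).fderiv
  -- Fminus ∘ ψ = id
  have hid : Fminus L ∘ ψ = id := by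
    funext y
    exact Function.rightInverse_invFun hbij.surjective y
  have hchain : Am.comp Dψ = ContinuousLinearMap.id ℝ _ := by
    have h1 : HasFDerivAt (Fminus L ∘ ψ) (Am.comp Dψ) z :=
      hFm.comp z hψdiff.hasFDerivAt
    rw [hid] at h1
    exact h1.unique (hasFDerivAt_id z)
  have hAm : ∀ x, Am (Dψ x) = x := by
    intro x
    have := congrArg (fun T => T x) hchain
    simpa using this
  -- key pointwise identity: ω(A⁺x, A⁺y) = ω(A⁻x, A⁻y)
  have hdecomp : ∀ x y : Q × Q, B x y = B (x.1, 0) y + B ((0 : Q), x.2) y := by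
    intro x y
    nth_rewrite 1 [show x = (x.1, (0 : Q)) + ((0 : Q), x.2) by simp]
    rw [map_add, ContinuousLinearMap.add_apply]
  have key : ∀ x y : Q × Q, symplForm (Ap x) (Ap y) = symplForm (Am x) (Am y) := by
    intro x y
    simp only [symplForm, hApdef, hAmdef, ContinuousLinearMap.prod_apply,
      ContinuousLinearMap.coe_fst', ContinuousLinearMap.coe_snd',
      ContinuousLinearMap.neg_apply, ContinuousLinearMap.coe_comp',
      Function.comp_apply, precompInl_apply, precompInr_apply]
    rw [hdecomp x (0, y.2), hdecomp y (0, x.2), hdecomp x (y.1, 0), hdecomp y (x.1, 0)]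
    have h1 := hsymm ((0 : Q), x.2) ((0 : Q), y.2)
    have h2 := hsymm (x.1, (0 : Q)) (y.1, (0 : Q))
    have h3 := hsymm ((0 : Q), x.2) (y.1, (0 : Q))
    have h4 := hsymm ((0 : Q), y.2) (x.1, (0 : Q))
    linarith
  rw [hcomp]
  rw [show (Ap.comp Dψ) u = Ap (Dψ u) from rfl, show (Ap.comp Dψ) v = Ap (Dψ v) from rfl,
    key (Dψ u) (Dψ v), hAm u, hAm v]
end

section
/- Let Q = ℝᵈ and L : TQ ≅ Q × Q → ℝ be C¹. Consider the Hamilton–Pontryagin action S̃(q,v,p) = ∫_a^b [L(q(t),v(t)) + p(t)·(q'(t) - v(t))] dt on C¹ curves (q,v,p) : [a,b] → Q × Q × Q*. Then (q,v,p) is a critical point of S̃ with respect to all C¹ variations (δq, δv, δp) with δq(a) = δq(b) = 0 if and only if the implicit Euler–Lagrange equations hold: p'(t) = D₁L(q(t),v(t)), p(t) = D₂L(q(t),v(t)), and q'(t) = v(t) for all t ∈ [a,b]. -/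
section helpers
variable {Q : Type*} [NormedAddCommGroup Q] [NormedSpace ℝ Q]

theorem D1_eq_s5 (L : Q × Q → ℝ) (hL : ContDiff ℝ 1 L) (x y : Q) (u : Q) :
    D1 L x y u = fderiv ℝ L (x, y) (u, 0) := by
  have hd : HasFDerivAt (fun x' : Q => L (x', y))
      ((fderiv ℝ L (x, y)).comp ((ContinuousLinearMap.id ℝ Q).prod 0)) x := by
    exact ((hL.differentiable one_ne_zero (x, y)).hasFDerivAt).comp x
      ((hasFDerivAt_id x).prodMk (hasFDerivAt_const y x))
  have := hd.fderiv
  simp only [D1, this]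
  rfl

theorem D2_eq_s5 (L : Q × Q → ℝ) (hL : ContDiff ℝ 1 L) (x y : Q) (w : Q) :
    D2 L x y w = fderiv ℝ L (x, y) (0, w) := by
  have hd : HasFDerivAt (fun y' : Q => L (x, y'))
      ((fderiv ℝ L (x, y)).comp ((0 : Q →L[ℝ] Q).prod (ContinuousLinearMap.id ℝ Q))) y := by
    exact ((hL.differentiable one_ne_zero (x, y)).hasFDerivAt).comp y
      ((hasFDerivAt_const x y).prodMk (hasFDerivAt_id y))
  have := hd.fderiv
  simp only [D2, this]
  rfl

theorem fderiv_split (L : Q × Q → ℝ) (hL : ContDiff ℝ 1 L) (x y u w : Q) :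
    fderiv ℝ L (x, y) (u, w) = D1 L x y u + D2 L x y w := by
  rw [D1_eq_s5 L hL, D2_eq_s5 L hL, ← ContinuousLinearMap.map_add]
  congr 1
  simp [Prod.ext_iff]

end helpers

section key
variable {Q : Type*} [NormedAddCommGroup Q] [NormedSpace ℝ Q]

/-- Gâteaux derivative of the Hamilton–Pontryagin action. -/
theorem key_hasDerivAt (L : Q × Q → ℝ) (hL : ContDiff ℝ 1 L) (a b : ℝ)
    (q v δq δv : ℝ → Q) (p δp : ℝ → Q →L[ℝ] ℝ)
    (hq : ContDiff ℝ 1 q) (hv : ContDiff ℝ 1 v) (hp : ContDiff ℝ 1 p)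
    (hδq : ContDiff ℝ 1 δq) (hδv : ContDiff ℝ 1 δv) (hδp : ContDiff ℝ 1 δp) :
    HasDerivAt (fun ε : ℝ =>
        ∫ t in a..b,
          (L (q t + ε • δq t, v t + ε • δv t)
            + (p t + ε • δp t)
              (deriv (fun u => q u + ε • δq u) t - (v t + ε • δv t))))
      (∫ t in a..b,
        (D1 L (q t) (v t) (δq t) + D2 L (q t) (v t) (δv t)
          + δp t (deriv q t - v t) + p t (deriv δq t - δv t))) 0 := by
  -- differentiability of curves
  have hqd := hq.differentiable one_ne_zero
  have hvd := hv.differentiable one_ne_zero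
  have hpd := hp.differentiable one_ne_zero
  have hδqd := hδq.differentiable one_ne_zero
  have hδvd := hδv.differentiable one_ne_zero
  have hδpd := hδp.differentiable one_ne_zero
  -- rewrite the inner deriv
  have hder : ∀ (ε t : ℝ), deriv (fun u => q u + ε • δq u) t = deriv q t + ε • deriv δq t := by
    intro ε t
    exact (((hqd t).hasDerivAt).add (((hδqd t).hasDerivAt).const_smul ε)).deriv
  set F : ℝ → ℝ → ℝ := fun ε t =>
    L (q t + ε • δq t, v t + ε • δv t)
      + (p t + ε • δp t) ((deriv q t + ε • deriv δq t) - (v t + ε • δv t)) with hF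
  set F' : ℝ → ℝ → ℝ := fun ε t =>
    fderiv ℝ L (q t + ε • δq t, v t + ε • δv t) (δq t, δv t)
      + δp t ((deriv q t + ε • deriv δq t) - (v t + ε • δv t))
      + (p t + ε • δp t) (deriv δq t - δv t) with hF'
  have hFeq : ∀ ε : ℝ, (fun t => L (q t + ε • δq t, v t + ε • δv t)
      + (p t + ε • δp t) (deriv (fun u => q u + ε • δq u) t - (v t + ε • δv t))) = F ε := by
    intro ε; funext t; simp only [hF, hder]
  -- pointwise derivative in ε
  have hdiff : ∀ (t : ℝ) (ε : ℝ), HasDerivAt (fun x => F x t) (F' ε t) ε := by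
    intro t ε
    have hc1 : HasDerivAt (fun x : ℝ => q t + x • δq t) (δq t) ε := by
      simpa using ((hasDerivAt_id ε).smul_const (δq t)).const_add (q t)
    have hc2 : HasDerivAt (fun x : ℝ => v t + x • δv t) (δv t) ε := by
      simpa using ((hasDerivAt_id ε).smul_const (δv t)).const_add (v t)
    have hc : HasDerivAt (fun x : ℝ => ((q t + x • δq t, v t + x • δv t) : Q × Q))
        ((δq t, δv t)) ε := hc1.prodMk hc2
    have hL1 : HasDerivAt (fun x : ℝ => L (q t + x • δq t, v t + x • δv t))
        (fderiv ℝ L (q t + ε • δq t, v t + ε • δv t) (δq t, δv t)) ε :=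
      ((hL.differentiable one_ne_zero _).hasFDerivAt).comp_hasDerivAt ε hc
    have hP : HasDerivAt (fun x : ℝ => p t + x • δp t) (δp t) ε := by
      simpa using ((hasDerivAt_id ε).smul_const (δp t)).const_add (p t)
    have hw : HasDerivAt (fun x : ℝ => (deriv q t + x • deriv δq t) - (v t + x • δv t))
        (deriv δq t - δv t) ε := by
      have h1 : HasDerivAt (fun x : ℝ => deriv q t + x • deriv δq t) (deriv δq t) ε := by
        simpa using ((hasDerivAt_id ε).smul_const (deriv δq t)).const_add (deriv q t)
      have h2 : HasDerivAt (fun x : ℝ => v t + x • δv t) (δv t) ε := hc2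
      exact h1.sub h2
    have h2 := hP.clm_apply hw
    have := hL1.add h2
    simpa only [hF', add_assoc, Pi.add_def] using this
  -- joint continuity of F'
  have hcontqd : Continuous (deriv q) := hq.continuous_deriv le_rfl
  have hcontδqd : Continuous (deriv δq) := hδq.continuous_deriv le_rfl
  have hcurve : Continuous (fun z : ℝ × ℝ => ((q z.2 + z.1 • δq z.2, v z.2 + z.1 • δv z.2) : Q × Q)) := by
    fun_prop
  have hcontF' : Continuous (fun z : ℝ × ℝ => F' z.1 z.2) := by
    apply Continuous.add
    apply Continuous.add
    · exact ((hL.continuous_fderiv one_ne_zero).comp hcurve).clm_apply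
        ((hδq.continuous.comp continuous_snd).prodMk (hδv.continuous.comp continuous_snd))
    · exact (hδp.continuous.comp continuous_snd).clm_apply
        (by fun_prop)
    · exact (by fun_prop : Continuous fun z : ℝ × ℝ => p z.2 + z.1 • δp z.2).clm_apply
        (by fun_prop)
  have hcontF : ∀ ε : ℝ, Continuous (F ε) := by
    intro ε
    apply Continuous.add
    · exact hL.continuous.comp (by fun_prop)
    · exact (by fun_prop : Continuous fun t : ℝ => p t + ε • δp t).clm_apply (by fun_prop)
  -- bound on F' over compact set
  obtain ⟨C, hC⟩ : ∃ C, ∀ z ∈ (Metric.closedBall (0:ℝ) 1) ×ˢ Set.uIcc a b,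
      ‖F' z.1 z.2‖ ≤ C :=
    ((isCompact_closedBall (0:ℝ) 1).prod isCompact_uIcc).exists_bound_of_continuousOn
      hcontF'.continuousOn
  have main := (intervalIntegral.hasDerivAt_integral_of_dominated_loc_of_deriv_le
    (F := F) (F' := F') (x₀ := (0:ℝ)) (bound := fun _ => C) (μ := MeasureTheory.volume)
    (Metric.ball_mem_nhds (0:ℝ) zero_lt_one)
    (Filter.Eventually.of_forall fun x => ((hcontF x).aestronglyMeasurable))
    ((hcontF 0).intervalIntegrable a b)
    ((hcontF'.comp (Continuous.prodMk_right (0:ℝ))).aestronglyMeasurable)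
    (Filter.Eventually.of_forall fun t ht x hx => hC (x, t)
      ⟨Metric.ball_subset_closedBall hx, Set.uIoc_subset_uIcc ht⟩)
    (intervalIntegrable_const)
    (Filter.Eventually.of_forall fun t _ x _ => hdiff t x)).2
  -- identify F' 0 with the stated integrand
  have hid : ∀ t : ℝ, F' 0 t =
      D1 L (q t) (v t) (δq t) + D2 L (q t) (v t) (δv t)
        + δp t (deriv q t - v t) + p t (deriv δq t - δv t) := by
    intro t
    simp only [hF', zero_smul, add_zero]
    rw [fderiv_split L hL]
  have hmain : HasDerivAt (fun ε : ℝ => ∫ t in a..b, F ε t)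
      (∫ t in a..b,
        (D1 L (q t) (v t) (δq t) + D2 L (q t) (v t) (δv t)
          + δp t (deriv q t - v t) + p t (deriv δq t - δv t))) 0 := by
    rw [show (∫ t in a..b,
        (D1 L (q t) (v t) (δq t) + D2 L (q t) (v t) (δv t)
          + δp t (deriv q t - v t) + p t (deriv δq t - δv t))) = ∫ t in a..b, F' 0 t by
      apply intervalIntegral.integral_congr; intro t _; rw [hid]]
    exact main
  refine HasDerivAt.congr_of_eventuallyEq hmain ?_
  exact Filter.Eventually.of_forall fun ε => by simp only [hder, hF]

section fund

theorem fund_aux (f : ℝ → ℝ) (hf : Continuous f) (a b : ℝ)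
    (h : ∀ φ : ℝ → ℝ, ContDiff ℝ 1 φ → Function.support φ ⊆ Set.Ioo a b →
      ∫ t in a..b, f t * φ t = 0)
    (t0 : ℝ) (ht0 : t0 ∈ Set.Ioo a b) (hpos : 0 < f t0) : False := by
  set m := f t0 / 2 with hm
  have hmpos : 0 < m := by positivity
  have hev : ∀ᶠ s in nhds t0, m < f s :=
    (hf.continuousAt (x := t0)).eventually_const_lt (by linarith [hm])
  obtain ⟨δ, hδpos, hδ⟩ := Metric.eventually_nhds_iff.1 hev
  set r : ℝ := min δ (min (t0 - a) (b - t0)) / 3 with hr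
  have hrpos : 0 < r := by
    have := ht0.1; have := ht0.2
    apply div_pos _ (by norm_num)
    exact lt_min hδpos (lt_min (by linarith) (by linarith))
  have h2rδ : 2 * r < δ := by
    have : r ≤ δ / 3 := by
      apply div_le_div_of_nonneg_right (min_le_left _ _) (by norm_num)
    linarith
  have h2ra : 2 * r < t0 - a := by
    have : r ≤ (t0 - a) / 3 := by
      apply div_le_div_of_nonneg_right (le_trans (min_le_right _ _) (min_le_left _ _)) (by norm_num)
    linarith
  have h2rb : 2 * r < b - t0 := by
    have : r ≤ (b - t0) / 3 := by
      apply div_le_div_of_nonneg_right (le_trans (min_le_right _ _) (min_le_right _ _)) (by norm_num)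
    linarith
  -- bump function
  set B : ContDiffBump t0 := ⟨r, 2 * r, hrpos, by linarith⟩ with hB
  have hout : B.rOut = 2 * r := rfl
  have hin : B.rIn = r := rfl
  have hsupp : Function.support (B : ℝ → ℝ) ⊆ Set.Ioo a b := by
    rw [B.support_eq]
    intro s hs
    rw [Metric.mem_ball, Real.dist_eq, hout] at hs
    constructor
    · rcases abs_lt.1 hs with ⟨h1, _⟩; linarith
    · rcases abs_lt.1 hs with ⟨_, h2⟩; linarith
  have hzero := h B B.contDiff hsupp
  -- positivity of the integral
  have hnonneg : ∀ s : ℝ, 0 ≤ f s * B s := by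
    intro s
    by_cases hsB : B s = 0
    · simp [hsB]
    · have hsb : s ∈ Metric.ball t0 (2 * r) := by
        rw [← B.support_eq]; exact Function.mem_support.2 hsB
      rw [Metric.mem_ball, Real.dist_eq] at hsb
      have : m < f s := hδ (by rw [Real.dist_eq]; rcases abs_lt.1 hsb with ⟨u1, u2⟩; rw [abs_lt]; constructor <;> linarith)
      exact mul_nonneg (by linarith) B.nonneg
  have hcont : Continuous fun s => f s * B s := hf.mul B.continuous
  have hint : ∀ c e : ℝ, IntervalIntegrable (fun s => f s * B s) MeasureTheory.volume c e :=
    fun c e => hcont.intervalIntegrable c e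
  have hmid : (2 * r) * m ≤ ∫ s in (t0 - r)..(t0 + r), f s * B s := by
    have hcm : ∫ s in (t0 - r)..(t0 + r), m = (2 * r) * m := by
      rw [intervalIntegral.integral_const, smul_eq_mul]; ring
    rw [← hcm]
    apply intervalIntegral.integral_mono_on (by linarith)
      (intervalIntegrable_const) (hint _ _)
    intro s hs
    have hb1 : B s = 1 := B.one_of_mem_closedBall (by
      rw [Metric.mem_closedBall, Real.dist_eq, hin, abs_le]
      constructor <;> [linarith [hs.1]; linarith [hs.2]])
    have hfs : m < f s := hδ (by
      rw [Real.dist_eq, abs_lt]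
      constructor <;> [linarith [hs.1, hrpos, h2rδ]; linarith [hs.2, hrpos, h2rδ]])
    rw [hb1]; linarith
  have hsplit : ∫ s in a..b, f s * B s =
      (∫ s in a..(t0 - r), f s * B s) + (∫ s in (t0 - r)..(t0 + r), f s * B s)
        + ∫ s in (t0 + r)..b, f s * B s := by
    rw [intervalIntegral.integral_add_adjacent_intervals (hint _ _) (hint _ _),
      intervalIntegral.integral_add_adjacent_intervals (hint _ _) (hint _ _)]
  have h1 : 0 ≤ ∫ s in a..(t0 - r), f s * B s :=
    intervalIntegral.integral_nonneg (by linarith [ht0.1]) (fun s _ => hnonneg s)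
  have h3 : 0 ≤ ∫ s in (t0 + r)..b, f s * B s :=
    intervalIntegral.integral_nonneg (by linarith [ht0.2]) (fun s _ => hnonneg s)
  have : 0 < ∫ s in a..b, f s * B s := by
    rw [hsplit]
    have : 0 < 2 * r * m := by positivity
    linarith
  rw [hzero] at this
  exact lt_irrefl 0 this

theorem fund (f : ℝ → ℝ) (hf : Continuous f) (a b : ℝ) (hab : a < b)
    (h : ∀ φ : ℝ → ℝ, ContDiff ℝ 1 φ → Function.support φ ⊆ Set.Ioo a b →
      ∫ t in a..b, f t * φ t = 0) :
    ∀ t ∈ Set.Icc a b, f t = 0 := by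
  have hIoo : ∀ t ∈ Set.Ioo a b, f t = 0 := by
    intro t0 ht0
    by_contra hne
    rcases lt_or_gt_of_ne hne with hlt | hgt
    · apply fund_aux (fun s => -f s) (hf.neg) a b ?_ t0 ht0 (by simpa using hlt)
      intro φ hφ hsupp
      have := h φ hφ hsupp
      simp only [neg_mul]
      rw [intervalIntegral.integral_neg, this, neg_zero]
    · exact fund_aux f hf a b h t0 ht0 hgt
  have hEq : Set.EqOn f 0 (Set.Ioo a b) := fun t ht => hIoo t ht
  have := hEq.closure hf continuous_const
  rw [closure_Ioo hab.ne] at this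
  intro t ht
  exact this ht

end fund

/-- The Hamilton–Pontryagin principle: a curve (q,v,p) is critical for the
Hamilton–Pontryagin action iff it satisfies the implicit Euler–Lagrange
equations p' = D₁L(q,v), p = D₂L(q,v), q' = v on [a,b]. -/
theorem hamilton_pontryagin_critical_iff_implicit_euler_lagrange
    (d : ℕ) (L : (Fin d → ℝ) × (Fin d → ℝ) → ℝ) (hL : ContDiff ℝ 1 L)
    (a b : ℝ) (hab : a < b)
    (q v : ℝ → Fin d → ℝ) (p : ℝ → (Fin d → ℝ) →L[ℝ] ℝ)
    (hq : ContDiff ℝ 1 q) (hv : ContDiff ℝ 1 v) (hp : ContDiff ℝ 1 p) :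
    (∀ (δq δv : ℝ → Fin d → ℝ) (δp : ℝ → (Fin d → ℝ) →L[ℝ] ℝ),
      ContDiff ℝ 1 δq → ContDiff ℝ 1 δv → ContDiff ℝ 1 δp →
      δq a = 0 → δq b = 0 →
      deriv (fun ε : ℝ =>
        ∫ t in a..b,
          (L (q t + ε • δq t, v t + ε • δv t)
            + (p t + ε • δp t)
              (deriv (fun u => q u + ε • δq u) t - (v t + ε • δv t)))) 0 = 0)
    ↔ (∀ t ∈ Set.Icc a b,
        deriv p t = D1 L (q t) (v t) ∧
        p t = D2 L (q t) (v t) ∧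
        deriv q t = v t) := by
  have hqc := hq.continuous
  have hvc := hv.continuous
  have hpc := hp.continuous
  have hqd : Continuous (deriv q) := hq.continuous_deriv le_rfl
  have hpd : Continuous (deriv p) := hp.continuous_deriv le_rfl
  have hfdc : Continuous (fun t : ℝ => fderiv ℝ L (q t, v t)) :=
    (hL.continuous_fderiv one_ne_zero).comp (hqc.prodMk hvc)
  constructor
  · intro hcrit
    have hG : ∀ (δq δv : ℝ → Fin d → ℝ) (δp : ℝ → (Fin d → ℝ) →L[ℝ] ℝ),
        ContDiff ℝ 1 δq → ContDiff ℝ 1 δv → ContDiff ℝ 1 δp →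
        δq a = 0 → δq b = 0 →
        (∫ t in a..b,
          (D1 L (q t) (v t) (δq t) + D2 L (q t) (v t) (δv t)
            + δp t (deriv q t - v t) + p t (deriv δq t - δv t))) = 0 := by
      intro δq δv δp hδq hδv hδp h0a h0b
      have hk := key_hasDerivAt L hL a b q v δq δv p δp hq hv hp hδq hδv hδp
      rw [← hk.deriv]
      exact hcrit δq δv δp hδq hδv hδp h0a h0b
    -- (3) q' = v
    have h3 : ∀ t ∈ Set.Icc a b, deriv q t = v t := by
      have hℓ : ∀ ℓ : (Fin d → ℝ) →L[ℝ] ℝ, ∀ t ∈ Set.Icc a b, ℓ (deriv q t - v t) = 0 := by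
        intro ℓ
        apply fund _ (ℓ.continuous.comp (hqd.sub hvc)) a b hab
        intro φ hφ hsupp
        have := hG (fun _ => 0) (fun _ => 0) (fun t => φ t • ℓ)
          contDiff_const contDiff_const (hφ.smul contDiff_const) rfl rfl
        rw [← this]
        apply intervalIntegral.integral_congr
        intro t _
        simp [deriv_const', mul_comm]
      intro t ht
      have : deriv q t - v t = 0 := by
        funext i
        simpa using hℓ (ContinuousLinearMap.proj i) t ht
      exact sub_eq_zero.1 this
    -- (2) p = D2 L
    have h2 : ∀ t ∈ Set.Icc a b, p t = D2 L (q t) (v t) := by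
      have hw : ∀ w : Fin d → ℝ, ∀ t ∈ Set.Icc a b,
          D2 L (q t) (v t) w - p t w = 0 := by
        intro w
        have hc : Continuous fun t => D2 L (q t) (v t) w - p t w := by
          have : (fun t => D2 L (q t) (v t) w) = fun t => fderiv ℝ L (q t, v t) (0, w) := by
            funext t; rw [D2_eq_s5 L hL]
          rw [show (fun t => D2 L (q t) (v t) w - p t w)
              = fun t => fderiv ℝ L (q t, v t) (0, w) - p t w by
            funext t; rw [D2_eq_s5 L hL]]
          exact (hfdc.clm_apply continuous_const).sub (hpc.clm_apply continuous_const)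
        apply fund _ hc a b hab
        intro φ hφ hsupp
        have := hG (fun _ => 0) (fun t => φ t • w) (fun _ => 0)
          contDiff_const (hφ.smul contDiff_const) contDiff_const rfl rfl
        rw [← this]
        apply intervalIntegral.integral_congr
        intro t _
        simp [deriv_const', ContinuousLinearMap.map_smul, smul_eq_mul]
        ring
      intro t ht
      ext w
      have := hw w t ht
      linarith [this]
    -- (1) p' = D1 L
    have h1 : ∀ t ∈ Set.Icc a b, deriv p t = D1 L (q t) (v t) := by
      have hw : ∀ w : Fin d → ℝ, ∀ t ∈ Set.Icc a b,
          fderiv ℝ L (q t, v t) (w, 0) - deriv p t w = 0 := by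
        intro w
        apply fund _ ((hfdc.clm_apply continuous_const).sub (hpd.clm_apply continuous_const))
          a b hab
        intro φ hφ hsupp
        have hφa : φ a = 0 := by
          by_contra hne
          exact lt_irrefl a (hsupp (Function.mem_support.2 hne)).1
        have hφb : φ b = 0 := by
          by_contra hne
          exact lt_irrefl b (hsupp (Function.mem_support.2 hne)).2
        have hφd : Differentiable ℝ φ := hφ.differentiable one_ne_zero
        have hφdc : Continuous (deriv φ) := hφ.continuous_deriv le_rfl
        have hInt := hG (fun t => φ t • w) (fun _ => 0) (fun _ => 0)
          (hφ.smul contDiff_const) contDiff_const contDiff_const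
          (by simp [hφa]) (by simp [hφb])
        have hderφ : ∀ t : ℝ, deriv (fun s => φ s • w) t = deriv φ t • w :=
          fun t => ((hφd t).hasDerivAt.smul_const w).deriv
        have hInt' : ∫ t in a..b,
            (φ t * fderiv ℝ L (q t, v t) (w, 0) + deriv φ t * p t w) = 0 := by
          rw [← hInt]
          apply intervalIntegral.integral_congr
          intro t _
          simp only [hderφ, map_zero, ContinuousLinearMap.zero_apply, sub_zero,
            add_zero, zero_add, D1_eq_s5 L hL, ContinuousLinearMap.map_smul, smul_eq_mul]
          try rw [show (φ t • w, (0 : Fin d → ℝ))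
              = φ t • ((w, 0) : (Fin d → ℝ) × (Fin d → ℝ)) by
            rw [Prod.smul_mk, smul_zero]]
          try rw [ContinuousLinearMap.map_smul, smul_eq_mul]
          try ring
        have hIBP : ∫ t in a..b,
            (deriv φ t * p t w + φ t * deriv p t w) = 0 := by
          have := intervalIntegral.integral_eq_sub_of_hasDerivAt
            (f := fun s => φ s * p s w)
            (f' := fun t => deriv φ t * p t w + φ t * deriv p t w)
            (a := a) (b := b) ?_ ?_
          · rw [this, hφa, hφb]; ring
          · intro t _
            have hpw : HasDerivAt (fun s => p s w) (deriv p t w) t := by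
              simpa using
                ((hp.differentiable one_ne_zero t).hasDerivAt).clm_apply (hasDerivAt_const t w)
            exact (hφd t).hasDerivAt.mul hpw
          · apply Continuous.intervalIntegrable
            exact (hφdc.mul (hpc.clm_apply continuous_const)).add
              (hφ.continuous.mul (hpd.clm_apply continuous_const))
        have hi1 : IntervalIntegrable
            (fun t => φ t * fderiv ℝ L (q t, v t) (w, 0) + deriv φ t * p t w)
            MeasureTheory.volume a b := by
          apply Continuous.intervalIntegrable
          exact (hφ.continuous.mul (hfdc.clm_apply continuous_const)).add
            (hφdc.mul (hpc.clm_apply continuous_const))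
        have hi2 : IntervalIntegrable
            (fun t => deriv φ t * p t w + φ t * deriv p t w)
            MeasureTheory.volume a b := by
          apply Continuous.intervalIntegrable
          exact (hφdc.mul (hpc.clm_apply continuous_const)).add
            (hφ.continuous.mul (hpd.clm_apply continuous_const))
        calc ∫ t in a..b, (fderiv ℝ L (q t, v t) (w, 0) - deriv p t w) * φ t
            = ∫ t in a..b,
              ((φ t * fderiv ℝ L (q t, v t) (w, 0) + deriv φ t * p t w)
                - (deriv φ t * p t w + φ t * deriv p t w)) := by
              apply intervalIntegral.integral_congr
              intro t _
              ring
          _ = (∫ t in a..b,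
                (φ t * fderiv ℝ L (q t, v t) (w, 0) + deriv φ t * p t w))
              - ∫ t in a..b, (deriv φ t * p t w + φ t * deriv p t w) :=
              intervalIntegral.integral_sub hi1 hi2
          _ = 0 := by rw [hInt', hIBP]; ring
      intro t ht
      ext w
      have := hw w t ht
      rw [← D1_eq_s5 L hL] at this
      linarith [this]
    exact fun t ht => ⟨h1 t ht, h2 t ht, h3 t ht⟩
  · intro hEL δq δv δp hδq hδv hδp h0a h0b
    have hk := key_hasDerivAt L hL a b q v δq δv p δp hq hv hp hδq hδv hδp
    rw [hk.deriv]
    set G : ℝ → ℝ := fun t =>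
      D1 L (q t) (v t) (δq t) + D2 L (q t) (v t) (δv t)
        + δp t (deriv q t - v t) + p t (deriv δq t - δv t) with hGdef
    have hFTC : ∀ t ∈ Set.uIcc a b, HasDerivAt (fun s => p s (δq s)) (G t) t := by
      intro t ht
      rw [Set.uIcc_of_le hab.le] at ht
      obtain ⟨e1, e2, e3⟩ := hEL t ht
      have H := ((hp.differentiable one_ne_zero t).hasDerivAt).clm_apply
        ((hδq.differentiable one_ne_zero t).hasDerivAt)
      refine H.congr_deriv ?_
      simp only [hGdef, e3, sub_self, map_zero, add_zero]
      rw [← e2, e1, ContinuousLinearMap.map_sub]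
      ring
    have hGc : Continuous G := by
      apply Continuous.add
      apply Continuous.add
      apply Continuous.add
      · have : Continuous fun t => fderiv ℝ L (q t, v t) (δq t, 0) :=
          hfdc.clm_apply ((hδq.continuous).prodMk continuous_const)
        simp_rw [← D1_eq_s5 L hL] at this
        exact this
      · have : Continuous fun t => fderiv ℝ L (q t, v t) ((0 : Fin d → ℝ), δv t) :=
          hfdc.clm_apply (continuous_const.prodMk hδv.continuous)
        simp_rw [← D2_eq_s5 L hL] at this
        exact this
      · exact (hδp.continuous).clm_apply (hqd.sub hvc)
      · exact hpc.clm_apply ((hδq.continuous_deriv le_rfl).sub hδv.continuous)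
    rw [intervalIntegral.integral_eq_sub_of_hasDerivAt hFTC (hGc.intervalIntegrable a b)]
    rw [h0a, h0b]
    simp
end key
end

section
/- Let Q = ℝᵈ and L : Q × Q → ℝ be C¹. Consider the discrete Hamilton–Pontryagin paths: for n = 1,…,N, C¹ paths γₙ(s) = (qₙ⁰(s), pₙ⁰(s), qₙ¹(s), pₙ¹(s)) : [0,1] → (Q × Q*)² with pₙ⁰(0) = 0, pₙ¹(0) = 0, and admissibility q₁⁰(0) = q₀, qₙ¹(0) = qₙ₊₁⁰(0) for n = 1,…,N-1, q_N¹(0) = q_N. If the sequence of paths is a critical point of the action S̃ = ∑ₙ ∫₀¹ [L(qₙ⁰(s), qₙ¹(s)) - pₙ⁰(s)·(qₙ⁰)'(s) + pₙ¹(s)·(qₙ¹)'(s)] ds (with respect to all variations preserving the zero-section initial conditions and admissibility), then: (i) qₙ⁰ and qₙ¹ are constant in s, with q₁⁰ = q₀, qₙ¹ = qₙ₊₁⁰, q_N¹ = q_N; (ii) pₙ⁰(1) = -D₁L(qₙ⁰, qₙ¹) and pₙ¹(1) = D₂L(qₙ⁰, qₙ¹) for all n; (iii) pₙ¹(1) =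 pₙ₊₁⁰(1) for n = 1,…,N-1. -/
open MeasureTheory intervalIntegral Set Metric
open scoped Interval

/-- Fundamental lemma of the calculus of variations (positive-value version). -/
lemma DHP.fl_pos (h : ℝ → ℝ) (hc : Continuous h) {s₀ : ℝ} (hs₀ : s₀ ∈ Set.Ioo (0:ℝ) 1)
    (hpos : 0 < h s₀)
    (H : ∀ g : ℝ → ℝ, ContDiff ℝ 1 g → g 0 = 0 → g 1 = 0 →
      ∫ s in (0:ℝ)..1, g s * h s = 0) : False := by
  obtain ⟨δ₀, hδ₀pos, hδ₀⟩ : ∃ δ > 0, Metric.ball s₀ δ ⊆ h ⁻¹' Set.Ioi 0 :=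
    Metric.mem_nhds_iff.1 ((isOpen_Ioi.preimage hc).mem_nhds (by simpa using hpos))
  set δ : ℝ := min δ₀ (min s₀ (1 - s₀)) with hδdef
  have hδpos : 0 < δ := lt_min hδ₀pos (lt_min hs₀.1 (by linarith [hs₀.2]))
  have hδs₀ : δ ≤ s₀ := le_trans (min_le_right _ _) (min_le_left _ _)
  have hδ1 : δ ≤ 1 - s₀ := le_trans (min_le_right _ _) (min_le_right _ _)
  have hball : ∀ s ∈ Metric.ball s₀ δ, 0 < h s := fun s hs =>
    hδ₀ (Metric.ball_subset_ball (min_le_left _ _) hs)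
  set φ : ContDiffBump s₀ := ⟨δ/2, δ, by positivity, by linarith⟩
  have hg0 : φ 0 = 0 := φ.zero_of_le_dist (by
    simp only [Real.dist_eq, abs_sub_comm]
    rw [abs_of_nonneg (by linarith [hs₀.1] : (0:ℝ) ≤ s₀ - 0)]
    simpa using hδs₀)
  have hg1 : φ 1 = 0 := φ.zero_of_le_dist (by
    simp only [Real.dist_eq]
    rw [abs_of_nonneg (by linarith [hs₀.2] : (0:ℝ) ≤ 1 - s₀)]
    linarith)
  have hφc : ContDiff ℝ 1 (fun s => φ s) := φ.contDiff.of_le (by exact_mod_cast le_top)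
  have hint := H (fun s => φ s) hφc hg0 hg1
  have hpos' : 0 < ∫ s in (0:ℝ)..1, φ s * h s := by
    apply intervalIntegral.integral_pos one_pos
      ((hφc.continuous.mul hc).continuousOn)
    · intro x _
      by_cases hx : x ∈ Metric.ball s₀ δ
      · exact mul_nonneg (φ.nonneg' x) (hball x hx).le
      · have : φ x = 0 := by
          by_contra hne
          exact hx (by simpa [φ.support_eq] using Function.mem_support.2 hne)
        simp [this]
    · refine ⟨s₀, ⟨hs₀.1.le, hs₀.2.le⟩, ?_⟩
      have : φ s₀ = 1 := φ.one_of_mem_closedBall (by simp [Metric.mem_closedBall]; positivity)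
      simp only [Pi.mul_apply]; rw [this]; simpa using hpos
  exact hpos'.ne' hint

/-- Fundamental lemma of the calculus of variations on `[0,1]`. -/
lemma DHP.fl (h : ℝ → ℝ) (hc : Continuous h)
    (H : ∀ g : ℝ → ℝ, ContDiff ℝ 1 g → g 0 = 0 → g 1 = 0 →
      ∫ s in (0:ℝ)..1, g s * h s = 0) :
    ∀ s ∈ Set.Ioo (0:ℝ) 1, h s = 0 := by
  intro s hs
  by_contra hne
  rcases (Ne.lt_or_gt hne) with hlt | hlt
  · exact DHP.fl_pos (fun t => -h t) hc.neg hs (by simpa using hlt)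
      (fun g hg h0 h1 => by
        simpa [mul_neg, intervalIntegral.integral_neg] using H g hg h0 h1)
  · exact DHP.fl_pos h hc hs hlt H

lemma DHP.const_of_deriv_zero_Ioo (φ : ℝ → ℝ) (hφ : ContDiff ℝ 1 φ)
    (hd : ∀ s ∈ Set.Ioo (0:ℝ) 1, deriv φ s = 0) :
    ∀ s ∈ Set.Icc (0:ℝ) 1, φ s = φ 0 := by
  intro s hs
  have h0 : (0:ℝ) ∈ Set.Icc (0:ℝ) 1 := by norm_num
  have hdiff : DifferentiableOn ℝ φ (interior (Set.Icc (0:ℝ) 1)) :=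
    (hφ.differentiable one_ne_zero).differentiableOn
  have hmono := monotoneOn_of_deriv_nonneg (convex_Icc 0 1) hφ.continuous.continuousOn
    hdiff (by rw [interior_Icc]; intro x hx; rw [hd x hx])
  have hanti := antitoneOn_of_deriv_nonpos (convex_Icc 0 1) hφ.continuous.continuousOn
    hdiff (by rw [interior_Icc]; intro x hx; rw [hd x hx])
  exact le_antisymm (hanti h0 hs hs.1) (hmono h0 hs hs.1)

/-- Differentiation under the integral sign for the parametric families we need. -/
lemma DHP.hasDerivAt_param_integral {E : Type*} [NormedAddCommGroup E] [NormedSpace ℝ E]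
    (f : E → ℝ) (hf : ContDiff ℝ 1 f) (g : ℝ → ℝ) (hg : Continuous g) (a v : E) :
    HasDerivAt (fun ε : ℝ => ∫ s in (0:ℝ)..1, f (a + (ε * g s) • v))
      ((∫ s in (0:ℝ)..1, g s) * fderiv ℝ f a v) 0 := by
  have hfd : Differentiable ℝ f := hf.differentiable one_ne_zero
  have hfc : Continuous (fderiv ℝ f) := hf.continuous_fderiv one_ne_zero
  obtain ⟨Cg, hCg⟩ := isCompact_Icc.exists_bound_of_continuousOn
    (hg.continuousOn : ContinuousOn g (Icc (0:ℝ) 1))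
  set C : ℝ := max Cg 0 with hC
  have hgbd : ∀ s ∈ Set.Icc (0:ℝ) 1, |g s| ≤ C := by
    intro s hs
    have := hCg s hs
    rw [Real.norm_eq_abs] at this
    exact this.trans (le_max_left _ _)
  set K : Set E := (fun t : ℝ => a + t • v) '' Set.Icc (-C) C with hK
  have hKc : IsCompact K := isCompact_Icc.image (by fun_prop)
  obtain ⟨Cf, hCf⟩ := hKc.exists_bound_of_continuousOn
    (hfc.norm.continuousOn : ContinuousOn (fun x : E => ‖fderiv ℝ f x‖) K)
  have hCf' : ∀ x ∈ K, ‖fderiv ℝ f x‖ ≤ Cf := by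
    intro x hx; simpa using hCf x hx
  set F : ℝ → ℝ → ℝ := fun ε s => f (a + (ε * g s) • v) with hF
  set F' : ℝ → ℝ → ℝ := fun ε s => g s * fderiv ℝ f (a + (ε * g s) • v) v with hF'
  have hmemK : ∀ (ε : ℝ), ε ∈ ball (0:ℝ) 1 → ∀ s ∈ Set.Icc (0:ℝ) 1,
      a + (ε * g s) • v ∈ K := by
    intro ε hε s hs
    refine ⟨ε * g s, ?_, rfl⟩
    have h1 : |ε| ≤ 1 := le_of_lt (by simpa using hε)
    have h2 : |ε * g s| ≤ C := by
      rw [abs_mul]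
      calc |ε| * |g s| ≤ 1 * C :=
        mul_le_mul h1 (hgbd s hs) (abs_nonneg _) zero_le_one
      _ = C := one_mul C
    exact abs_le.1 h2
  have hcontF : ∀ ε : ℝ, Continuous (F ε) := by
    intro ε
    exact hf.continuous.comp (by fun_prop)
  have key := intervalIntegral.hasDerivAt_integral_of_dominated_loc_of_deriv_le
    (F := F) (F' := F') (x₀ := (0:ℝ)) (a := (0:ℝ)) (b := 1) (μ := volume)
    (bound := fun _ => C * (Cf * ‖v‖)) (s := Metric.ball (0:ℝ) 1) (Metric.ball_mem_nhds 0 one_pos)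
    (Filter.Eventually.of_forall fun ε => (hcontF ε).aestronglyMeasurable)
    ((hcontF 0).intervalIntegrable _ _)
    ((hg.mul ((hfc.comp (by fun_prop)).clm_apply continuous_const)).aestronglyMeasurable)
    (Filter.Eventually.of_forall ?_) (intervalIntegrable_const)
    (Filter.Eventually.of_forall ?_)
  · have h2 : (∫ s in (0:ℝ)..1, F' 0 s) = (∫ s in (0:ℝ)..1, g s) * fderiv ℝ f a v := by
      have : ∀ s, F' 0 s = g s * fderiv ℝ f a v := by
        intro s; simp [hF']
      simp only [this]
      exact intervalIntegral.integral_mul_const _ _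
    exact h2 ▸ key.2
  · intro t ht ε hε
    have ht' : t ∈ Set.Icc (0:ℝ) 1 := by
      rw [uIoc_of_le (by norm_num : (0:ℝ) ≤ 1)] at ht
      exact ⟨ht.1.le, ht.2⟩
    have hptK := hmemK ε hε t ht'
    have hb : ‖fderiv ℝ f (a + (ε * g t) • v) v‖ ≤ Cf * ‖v‖ :=
      le_trans (ContinuousLinearMap.le_opNorm _ _)
        (mul_le_mul_of_nonneg_right (hCf' _ hptK) (norm_nonneg _))
    calc ‖F' ε t‖ = |g t| * ‖fderiv ℝ f (a + (ε * g t) • v) v‖ := by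
          simp [hF', abs_mul, Real.norm_eq_abs]
      _ ≤ C * (Cf * ‖v‖) :=
          mul_le_mul (hgbd t ht') hb (norm_nonneg _) (le_max_right _ _)
  · intro t _ ε _
    have h1 : HasDerivAt (fun x : ℝ => a + (x * g t) • v) (g t • v) ε := by
      have h0 : HasDerivAt (fun x : ℝ => x * g t) (g t) ε := hasDerivAt_mul_const _
      simpa using (h0.smul_const v).const_add a
    have h2 := (hfd (a + (ε * g t) • v)).hasFDerivAt.comp_hasDerivAt ε h1
    simpa [hF, hF', _root_.map_smul, smul_eq_mul, mul_comm, Function.comp_def] using h2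

set_option maxHeartbeats 2000000 in
/-- Discrete Hamilton–Pontryagin principle on the pair groupoid: a critical
sequence of paths in T*(Q×Q) starting at the zero section, admissible at s = 0,
satisfies (i) constancy of the configuration components together with the
discrete second-order condition, (ii) the discrete Legendre transforms,
(iii) the discrete Euler–Lagrange (momentum matching) equations. -/
theorem discrete_hamilton_pontryagin_pair_groupoid
    (d : ℕ) (L : (Fin d → ℝ) × (Fin d → ℝ) → ℝ) (hL : ContDiff ℝ 1 L)
    (N : ℕ) (hN : 1 ≤ N) (qa qb : Fin d → ℝ)
    (q0 q1 : ℕ → ℝ → Fin d → ℝ)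
    (p0 p1 : ℕ → ℝ → (Fin d → ℝ) →L[ℝ] ℝ)
    (hq0 : ∀ n, ContDiff ℝ 1 (q0 n)) (hq1 : ∀ n, ContDiff ℝ 1 (q1 n))
    (hp0 : ∀ n, ContDiff ℝ 1 (p0 n)) (hp1 : ∀ n, ContDiff ℝ 1 (p1 n))
    -- paths start on the zero section
    (hzero0 : ∀ n, p0 n 0 = 0) (hzero1 : ∀ n, p1 n 0 = 0)
    -- admissibility at s = 0
    (hadm0 : q0 1 0 = qa)
    (hadm : ∀ n, 1 ≤ n → n ≤ N - 1 → q1 n 0 = q0 (n + 1) 0)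
    (hadmN : q1 N 0 = qb)
    -- criticality of the discrete Hamilton–Pontryagin action
    (hcrit : ∀ (δq0 δq1 : ℕ → ℝ → Fin d → ℝ)
        (δp0 δp1 : ℕ → ℝ → (Fin d → ℝ) →L[ℝ] ℝ),
      (∀ n, ContDiff ℝ 1 (δq0 n)) → (∀ n, ContDiff ℝ 1 (δq1 n)) →
      (∀ n, ContDiff ℝ 1 (δp0 n)) → (∀ n, ContDiff ℝ 1 (δp1 n)) →
      (∀ n, δp0 n 0 = 0) → (∀ n, δp1 n 0 = 0) →
      δq0 1 0 = 0 →
      (∀ n, 1 ≤ n → n ≤ N - 1 → δq1 n 0 = δq0 (n + 1) 0) →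
      δq1 N 0 = 0 →
      deriv (fun ε : ℝ =>
        ∑ n ∈ Finset.Icc 1 N, ∫ s in (0:ℝ)..1,
          (L (q0 n s + ε • δq0 n s, q1 n s + ε • δq1 n s)
            - (p0 n s + ε • δp0 n s) (deriv (fun u => q0 n u + ε • δq0 n u) s)
            + (p1 n s + ε • δp1 n s) (deriv (fun u => q1 n u + ε • δq1 n u) s)))
        0 = 0) :
    -- (i) configuration components are constant and match up
    ((∀ n, 1 ≤ n → n ≤ N → ∀ s ∈ Set.Icc (0:ℝ) 1,
        q0 n s = q0 n 0 ∧ q1 n s = q1 n 0) ∧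
      q0 1 0 = qa ∧
      (∀ n, 1 ≤ n → n ≤ N - 1 → q1 n 0 = q0 (n + 1) 0) ∧
      q1 N 0 = qb) ∧
    -- (ii) discrete Legendre transforms
    (∀ n, 1 ≤ n → n ≤ N →
      p0 n 1 = -D1 L (q0 n 0) (q1 n 0) ∧ p1 n 1 = D2 L (q0 n 0) (q1 n 0)) ∧
    -- (iii) discrete Euler–Lagrange equations
    (∀ n, 1 ≤ n → n ≤ N - 1 → p1 n 1 = p0 (n + 1) 1) := by
  -- continuity facts
  have hq0c : ∀ n, Continuous (q0 n) := fun n => (hq0 n).continuous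
  have hq1c : ∀ n, Continuous (q1 n) := fun n => (hq1 n).continuous
  have hp0c : ∀ n, Continuous (p0 n) := fun n => (hp0 n).continuous
  have hp1c : ∀ n, Continuous (p1 n) := fun n => (hp1 n).continuous
  have hq0d : ∀ n, Continuous (deriv (q0 n)) := fun n => (hq0 n).continuous_deriv le_rfl
  have hq1d : ∀ n, Continuous (deriv (q1 n)) := fun n => (hq1 n).continuous_deriv le_rfl
  have hq0da : ∀ n s, HasDerivAt (q0 n) (deriv (q0 n) s) s :=
    fun n s => ((hq0 n).differentiable one_ne_zero s).hasDerivAt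
  have hq1da : ∀ n s, HasDerivAt (q1 n) (deriv (q1 n) s) s :=
    fun n s => ((hq1 n).differentiable one_ne_zero s).hasDerivAt
  have hbase : ∀ n, Continuous (fun s =>
      L (q0 n s, q1 n s) - p0 n s (deriv (q0 n) s) + p1 n s (deriv (q1 n) s)) := fun n =>
    ((hL.continuous.comp ((hq0c n).prodMk (hq1c n))).sub
      ((hp0c n).clm_apply (hq0d n))).add ((hp1c n).clm_apply (hq1d n))
  -- the zero variations, as local constants
  obtain ⟨Z, hZ⟩ : ∃ F : ℕ → ℝ → (Fin d → ℝ), F = fun _ _ => 0 := ⟨_, rfl⟩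
  obtain ⟨ZP, hZP⟩ : ∃ F : ℕ → ℝ → ((Fin d → ℝ) →L[ℝ] ℝ), F = fun _ _ => 0 := ⟨_, rfl⟩
  have hZc : ∀ n, ContDiff ℝ 1 (Z n) := fun n => by rw [hZ]; exact contDiff_const
  have hZPc : ∀ n, ContDiff ℝ 1 (ZP n) := fun n => by rw [hZP]; exact contDiff_const
  have hZ0 : ∀ n s, Z n s = 0 := fun n s => by rw [hZ]
  have hZP0 : ∀ n s, ZP n s = 0 := fun n s => by rw [hZP]
  -- Step 1: the configuration paths have vanishing derivative on (0,1)
  have hder0 : ∀ m ∈ Finset.Icc 1 N, ∀ s ∈ Set.Ioo (0:ℝ) 1, deriv (q0 m) s = 0 := by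
    intro m hm
    have key : ∀ (ℓ : (Fin d → ℝ) →L[ℝ] ℝ) (f : ℝ → ℝ), ContDiff ℝ 1 f → f 0 = 0 →
        ∫ s in (0:ℝ)..1, f s * ℓ (deriv (q0 m) s) = 0 := by
      intro ℓ f hf hf0
      obtain ⟨W, hW⟩ : ∃ F : ℕ → ℝ → ((Fin d → ℝ) →L[ℝ] ℝ),
          F = fun k s => if k = m then f s • ℓ else 0 := ⟨_, rfl⟩
      have hWc : ∀ n, ContDiff ℝ 1 (W n) := by
        intro n; rw [hW]
        by_cases hn : n = m
        · simp only [if_pos hn]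
          exact hf.smul contDiff_const
        · simp only [if_neg hn]
          exact contDiff_const
      have hW0 : ∀ n, W n 0 = 0 := by
        intro n; rw [hW]
        by_cases hn : n = m <;> simp [hn, hf0]
      have hc := hcrit Z Z W ZP hZc hZc hWc hZPc hW0 (fun n => hZP0 n 0)
        (hZ0 1 0) (fun n _ _ => (hZ0 n 0).trans (hZ0 (n+1) 0).symm) (hZ0 N 0)
      set B : ℝ := ∫ s in (0:ℝ)..1, f s * ℓ (deriv (q0 m) s) with hB
      have hBc : Continuous fun s => f s * ℓ (deriv (q0 m) s) :=
        hf.continuous.mul (ℓ.continuous.comp (hq0d m))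
      have hDA : HasDerivAt (fun ε : ℝ =>
          ∑ n ∈ Finset.Icc 1 N, ∫ s in (0:ℝ)..1,
            (L (q0 n s + ε • Z n s, q1 n s + ε • Z n s)
              - (p0 n s + ε • W n s) (deriv (fun u => q0 n u + ε • Z n u) s)
              + (p1 n s + ε • ZP n s) (deriv (fun u => q1 n u + ε • Z n u) s)))
          (-B) 0 := by
        have hsum : HasDerivAt (fun ε : ℝ =>
            ∑ n ∈ Finset.Icc 1 N, ∫ s in (0:ℝ)..1,
              (L (q0 n s + ε • Z n s, q1 n s + ε • Z n s)
                - (p0 n s + ε • W n s) (deriv (fun u => q0 n u + ε • Z n u) s)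
                + (p1 n s + ε • ZP n s) (deriv (fun u => q1 n u + ε • Z n u) s)))
            (∑ n ∈ Finset.Icc 1 N, (if n = m then -B else 0)) 0 := by
          apply HasDerivAt.fun_sum
          intro n _
          by_cases hn : n = m
          · rw [if_pos hn]; subst hn
            have hfe : (fun ε : ℝ => ∫ s in (0:ℝ)..1,
                (L (q0 n s + ε • Z n s, q1 n s + ε • Z n s)
                  - (p0 n s + ε • W n s) (deriv (fun u => q0 n u + ε • Z n u) s)
                  + (p1 n s + ε • ZP n s) (deriv (fun u => q1 n u + ε • Z n u) s)))
                = fun ε : ℝ => (∫ s in (0:ℝ)..1,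
                    (L (q0 n s, q1 n s) - p0 n s (deriv (q0 n) s)
                      + p1 n s (deriv (q1 n) s))) - ε * B := by
              funext ε
              have hptw : ∀ s : ℝ,
                  (L (q0 n s + ε • Z n s, q1 n s + ε • Z n s)
                    - (p0 n s + ε • W n s) (deriv (fun u => q0 n u + ε • Z n u) s)
                    + (p1 n s + ε • ZP n s) (deriv (fun u => q1 n u + ε • Z n u) s))
                  = (L (q0 n s, q1 n s) - p0 n s (deriv (q0 n) s)
                      + p1 n s (deriv (q1 n) s)) - ε * (f s * ℓ (deriv (q0 n) s)) := by
                intro s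
                simp only [hZ, hZP, hW, if_pos rfl, smul_zero, add_zero,
                  ContinuousLinearMap.add_apply, ContinuousLinearMap.smul_apply,
                  ContinuousLinearMap.zero_apply, smul_eq_mul]
                ring
              rw [funext hptw, intervalIntegral.integral_sub
                ((hbase n).intervalIntegrable _ _)
                ((continuous_const.fun_mul hBc).intervalIntegrable _ _),
                intervalIntegral.integral_const_mul]
            rw [hfe]
            simpa using (hasDerivAt_mul_const B).const_sub
              (∫ s in (0:ℝ)..1, (L (q0 n s, q1 n s) - p0 n s (deriv (q0 n) s)
                + p1 n s (deriv (q1 n) s)))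
          · rw [if_neg hn]
            have hfe : (fun ε : ℝ => ∫ s in (0:ℝ)..1,
                (L (q0 n s + ε • Z n s, q1 n s + ε • Z n s)
                  - (p0 n s + ε • W n s) (deriv (fun u => q0 n u + ε • Z n u) s)
                  + (p1 n s + ε • ZP n s) (deriv (fun u => q1 n u + ε • Z n u) s)))
                = fun _ : ℝ => ∫ s in (0:ℝ)..1,
                    (L (q0 n s, q1 n s) - p0 n s (deriv (q0 n) s)
                      + p1 n s (deriv (q1 n) s)) := by
              funext ε
              congr 1
              funext s
              simp only [hZ, hZP, hW, if_neg hn, smul_zero, add_zero]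
            rw [hfe]
            exact hasDerivAt_const _ _
        rwa [Finset.sum_ite_eq' (Finset.Icc 1 N) m (fun _ => -B), if_pos hm] at hsum
      have hfin : -B = 0 := hDA.deriv.symm.trans hc
      linarith [hfin]
    intro s hs
    funext i
    have hfl := DHP.fl (fun s => (ContinuousLinearMap.proj (R := ℝ)
        (φ := fun _ : Fin d => ℝ) i) (deriv (q0 m) s))
      ((ContinuousLinearMap.proj i).continuous.comp (hq0d m))
      (fun g hg h0 _ => key _ g hg h0) s hs
    simpa using hfl
  -- Step 1': same for q1
  have hder1 : ∀ m ∈ Finset.Icc 1 N, ∀ s ∈ Set.Ioo (0:ℝ) 1, deriv (q1 m) s = 0 := by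
    intro m hm
    have key : ∀ (ℓ : (Fin d → ℝ) →L[ℝ] ℝ) (f : ℝ → ℝ), ContDiff ℝ 1 f → f 0 = 0 →
        ∫ s in (0:ℝ)..1, f s * ℓ (deriv (q1 m) s) = 0 := by
      intro ℓ f hf hf0
      obtain ⟨W, hW⟩ : ∃ F : ℕ → ℝ → ((Fin d → ℝ) →L[ℝ] ℝ),
          F = fun k s => if k = m then f s • ℓ else 0 := ⟨_, rfl⟩
      have hWc : ∀ n, ContDiff ℝ 1 (W n) := by
        intro n; rw [hW]
        by_cases hn : n = m
        · simp only [if_pos hn]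
          exact hf.smul contDiff_const
        · simp only [if_neg hn]
          exact contDiff_const
      have hW0 : ∀ n, W n 0 = 0 := by
        intro n; rw [hW]
        by_cases hn : n = m <;> simp [hn, hf0]
      have hc := hcrit Z Z ZP W hZc hZc hZPc hWc (fun n => hZP0 n 0) hW0
        (hZ0 1 0) (fun n _ _ => (hZ0 n 0).trans (hZ0 (n+1) 0).symm) (hZ0 N 0)
      set B : ℝ := ∫ s in (0:ℝ)..1, f s * ℓ (deriv (q1 m) s) with hB
      have hBc : Continuous fun s => f s * ℓ (deriv (q1 m) s) :=
        hf.continuous.mul (ℓ.continuous.comp (hq1d m))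
      have hDA : HasDerivAt (fun ε : ℝ =>
          ∑ n ∈ Finset.Icc 1 N, ∫ s in (0:ℝ)..1,
            (L (q0 n s + ε • Z n s, q1 n s + ε • Z n s)
              - (p0 n s + ε • ZP n s) (deriv (fun u => q0 n u + ε • Z n u) s)
              + (p1 n s + ε • W n s) (deriv (fun u => q1 n u + ε • Z n u) s)))
          B 0 := by
        have hsum : HasDerivAt (fun ε : ℝ =>
            ∑ n ∈ Finset.Icc 1 N, ∫ s in (0:ℝ)..1,
              (L (q0 n s + ε • Z n s, q1 n s + ε • Z n s)
                - (p0 n s + ε • ZP n s) (deriv (fun u => q0 n u + ε • Z n u) s)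
                + (p1 n s + ε • W n s) (deriv (fun u => q1 n u + ε • Z n u) s)))
            (∑ n ∈ Finset.Icc 1 N, (if n = m then B else 0)) 0 := by
          apply HasDerivAt.fun_sum
          intro n _
          by_cases hn : n = m
          · rw [if_pos hn]; subst hn
            have hfe : (fun ε : ℝ => ∫ s in (0:ℝ)..1,
                (L (q0 n s + ε • Z n s, q1 n s + ε • Z n s)
                  - (p0 n s + ε • ZP n s) (deriv (fun u => q0 n u + ε • Z n u) s)
                  + (p1 n s + ε • W n s) (deriv (fun u => q1 n u + ε • Z n u) s)))
                = fun ε : ℝ => (∫ s in (0:ℝ)..1,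
                    (L (q0 n s, q1 n s) - p0 n s (deriv (q0 n) s)
                      + p1 n s (deriv (q1 n) s))) + ε * B := by
              funext ε
              have hptw : ∀ s : ℝ,
                  (L (q0 n s + ε • Z n s, q1 n s + ε • Z n s)
                    - (p0 n s + ε • ZP n s) (deriv (fun u => q0 n u + ε • Z n u) s)
                    + (p1 n s + ε • W n s) (deriv (fun u => q1 n u + ε • Z n u) s))
                  = (L (q0 n s, q1 n s) - p0 n s (deriv (q0 n) s)
                      + p1 n s (deriv (q1 n) s)) + ε * (f s * ℓ (deriv (q1 n) s)) := by
                intro s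
                simp only [hZ, hZP, hW, if_pos rfl, smul_zero, add_zero,
                  ContinuousLinearMap.add_apply, ContinuousLinearMap.smul_apply,
                  ContinuousLinearMap.zero_apply, smul_eq_mul]
                ring
              rw [funext hptw, intervalIntegral.integral_add
                ((hbase n).intervalIntegrable _ _)
                ((continuous_const.fun_mul hBc).intervalIntegrable _ _),
                intervalIntegral.integral_const_mul]
            rw [hfe]
            simpa [Pi.add_def] using (hasDerivAt_const (0:ℝ) (∫ s in (0:ℝ)..1,
              (L (q0 n s, q1 n s) - p0 n s (deriv (q0 n) s)
                + p1 n s (deriv (q1 n) s)))).add (hasDerivAt_mul_const B)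
          · rw [if_neg hn]
            have hfe : (fun ε : ℝ => ∫ s in (0:ℝ)..1,
                (L (q0 n s + ε • Z n s, q1 n s + ε • Z n s)
                  - (p0 n s + ε • ZP n s) (deriv (fun u => q0 n u + ε • Z n u) s)
                  + (p1 n s + ε • W n s) (deriv (fun u => q1 n u + ε • Z n u) s)))
                = fun _ : ℝ => ∫ s in (0:ℝ)..1,
                    (L (q0 n s, q1 n s) - p0 n s (deriv (q0 n) s)
                      + p1 n s (deriv (q1 n) s)) := by
              funext ε
              congr 1
              funext s
              simp only [hZ, hZP, hW, if_neg hn, smul_zero, add_zero]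
            rw [hfe]
            exact hasDerivAt_const _ _
        rwa [Finset.sum_ite_eq' (Finset.Icc 1 N) m (fun _ => B), if_pos hm] at hsum
      exact hDA.deriv.symm.trans hc
    intro s hs
    funext i
    have hfl := DHP.fl (fun s => (ContinuousLinearMap.proj (R := ℝ)
        (φ := fun _ : Fin d => ℝ) i) (deriv (q1 m) s))
      ((ContinuousLinearMap.proj i).continuous.comp (hq1d m))
      (fun g hg h0 _ => key _ g hg h0) s hs
    simpa using hfl
  -- Step 1'': the configuration paths are constant on [0,1]
  have hconst0 : ∀ m ∈ Finset.Icc 1 N, ∀ s ∈ Set.Icc (0:ℝ) 1, q0 m s = q0 m 0 := by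
    intro m hm s hs
    funext i
    have hφ : ContDiff ℝ 1 (fun t => q0 m t i) :=
      (ContinuousLinearMap.proj (R := ℝ) (φ := fun _ : Fin d => ℝ) i).contDiff.comp (hq0 m)
    refine DHP.const_of_deriv_zero_Ioo _ hφ ?_ s hs
    intro t ht
    have h := ((ContinuousLinearMap.proj (R := ℝ) (φ := fun _ : Fin d => ℝ)
      i).hasFDerivAt.comp_hasDerivAt t (hq0da m t)).deriv
    have h2 : deriv (fun t => q0 m t i) t = (deriv (q0 m) t) i := by
      simpa [Function.comp_def] using h
    rw [h2, hder0 m hm t ht]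
    rfl
  have hconst1 : ∀ m ∈ Finset.Icc 1 N, ∀ s ∈ Set.Icc (0:ℝ) 1, q1 m s = q1 m 0 := by
    intro m hm s hs
    funext i
    have hφ : ContDiff ℝ 1 (fun t => q1 m t i) :=
      (ContinuousLinearMap.proj (R := ℝ) (φ := fun _ : Fin d => ℝ) i).contDiff.comp (hq1 m)
    refine DHP.const_of_deriv_zero_Ioo _ hφ ?_ s hs
    intro t ht
    have h := ((ContinuousLinearMap.proj (R := ℝ) (φ := fun _ : Fin d => ℝ)
      i).hasFDerivAt.comp_hasDerivAt t (hq1da m t)).deriv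
    have h2 : deriv (fun t => q1 m t i) t = (deriv (q1 m) t) i := by
      simpa [Function.comp_def] using h
    rw [h2, hder1 m hm t ht]
    rfl
  -- a.e. helpers
  have hne1 : ∀ᵐ s : ℝ, s ≠ (1:ℝ) := by
    filter_upwards [(Set.countable_singleton (1:ℝ)).ae_notMem (μ := volume)] with x hx
    simpa using hx
  have hIoo_of : ∀ s : ℝ, s ∈ Ι (0:ℝ) 1 → s ≠ 1 → s ∈ Set.Ioo (0:ℝ) 1 := by
    intro s hsI hs1
    rw [Set.uIoc_of_le (by norm_num : (0:ℝ) ≤ 1)] at hsI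
    exact ⟨hsI.1, lt_of_le_of_ne hsI.2 hs1⟩
  -- Step 2: the discrete Legendre transform for p0
  have hLeg0 : ∀ m ∈ Finset.Icc 1 N, p0 m 1 = -D1 L (q0 m 0) (q1 m 0) := by
    intro m hm
    have key0 : ∀ (v : Fin d → ℝ) (g : ℝ → ℝ), ContDiff ℝ 1 g → g 0 = 0 → g 1 = 0 →
        (∫ s in (0:ℝ)..1, g s) * (D1 L (q0 m 0) (q1 m 0) v)
          = ∫ s in (0:ℝ)..1, deriv g s * (p0 m s v) := by
      intro v g hg hg0 hg1
      obtain ⟨W, hW⟩ : ∃ F : ℕ → ℝ → (Fin d → ℝ),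
          F = fun k s => if k = m then g s • v else 0 := ⟨_, rfl⟩
      have hWc : ∀ n, ContDiff ℝ 1 (W n) := by
        intro n; rw [hW]
        by_cases hn : n = m
        · simp only [if_pos hn]; exact hg.smul contDiff_const
        · simp only [if_neg hn]; exact contDiff_const
      have hc := hcrit W Z ZP ZP hWc hZc hZPc hZPc (fun n => hZP0 n 0) (fun n => hZP0 n 0)
        (by rw [hW]; by_cases h1 : 1 = m <;> simp [h1, hg0])
        (fun n _ _ => by rw [hW, hZ]; by_cases h1 : n + 1 = m <;> simp [h1, hg0])
        (hZ0 N 0)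
      set Cq : ℝ := ∫ s in (0:ℝ)..1, deriv g s * (p0 m s v) with hCqdef
      have hCqc : Continuous fun s => deriv g s * (p0 m s v) :=
        (hg.continuous_deriv le_rfl).mul ((hp0c m).clm_apply continuous_const)
      have hDA : HasDerivAt (fun ε : ℝ =>
          ∑ n ∈ Finset.Icc 1 N, ∫ s in (0:ℝ)..1,
            (L (q0 n s + ε • W n s, q1 n s + ε • Z n s)
              - (p0 n s + ε • ZP n s) (deriv (fun u => q0 n u + ε • W n u) s)
              + (p1 n s + ε • ZP n s) (deriv (fun u => q1 n u + ε • Z n u) s)))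
          ((∫ s in (0:ℝ)..1, g s) * (D1 L (q0 m 0) (q1 m 0) v) - Cq) 0 := by
        have hsum : HasDerivAt (fun ε : ℝ =>
            ∑ n ∈ Finset.Icc 1 N, ∫ s in (0:ℝ)..1,
              (L (q0 n s + ε • W n s, q1 n s + ε • Z n s)
                - (p0 n s + ε • ZP n s) (deriv (fun u => q0 n u + ε • W n u) s)
                + (p1 n s + ε • ZP n s) (deriv (fun u => q1 n u + ε • Z n u) s)))
            (∑ n ∈ Finset.Icc 1 N, (if n = m then
              (∫ s in (0:ℝ)..1, g s) * (D1 L (q0 m 0) (q1 m 0) v) - Cq else 0)) 0 := by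
          apply HasDerivAt.fun_sum
          intro n _
          by_cases hn : n = m
          · subst hn
            rw [if_pos rfl]
            have hfe : (fun ε : ℝ => ∫ s in (0:ℝ)..1,
                (L (q0 n s + ε • W n s, q1 n s + ε • Z n s)
                  - (p0 n s + ε • ZP n s) (deriv (fun u => q0 n u + ε • W n u) s)
                  + (p1 n s + ε • ZP n s) (deriv (fun u => q1 n u + ε • Z n u) s)))
                = fun ε : ℝ =>
                    (∫ s in (0:ℝ)..1, L (q0 n 0 + (ε * g s) • v, q1 n 0)) - ε * Cq := by
              funext ε
              have hae : ∀ᵐ s : ℝ, s ∈ Ι (0:ℝ) 1 →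
                  (L (q0 n s + ε • W n s, q1 n s + ε • Z n s)
                    - (p0 n s + ε • ZP n s) (deriv (fun u => q0 n u + ε • W n u) s)
                    + (p1 n s + ε • ZP n s) (deriv (fun u => q1 n u + ε • Z n u) s))
                  = L (q0 n 0 + (ε * g s) • v, q1 n 0)
                      - ε * (deriv g s * (p0 n s v)) := by
                filter_upwards [hne1] with s hs1 hsI
                have hsIoo := hIoo_of s hsI hs1
                have hsIcc : s ∈ Set.Icc (0:ℝ) 1 := ⟨hsIoo.1.le, hsIoo.2.le⟩
                simp only [hZ, hZP, hW, if_pos rfl, smul_zero, add_zero]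
                have hderW : deriv (fun u => q0 n u + ε • (g u • v)) s
                    = deriv (q0 n) s + (ε * deriv g s) • v := by
                  have h1 : HasDerivAt (fun u => q0 n u + ε • (g u • v))
                      (deriv (q0 n) s + ε • (deriv g s • v)) s :=
                    (hq0da n s).add
                      ((((hg.differentiable one_ne_zero s).hasDerivAt).smul_const v).const_smul ε)
                  rw [h1.deriv, smul_smul]
                rw [hderW, hconst0 n hm s hsIcc, hconst1 n hm s hsIcc,
                  hder0 n hm s hsIoo, hder1 n hm s hsIoo]
                simp only [zero_add, map_zero, _root_.map_smul, smul_eq_mul, smul_smul]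
                ring
              have hint1 : IntervalIntegrable
                  (fun s : ℝ => L (q0 n 0 + (ε * g s) • v, q1 n 0)) volume 0 1 :=
                Continuous.intervalIntegrable
                  (by exact hL.continuous.comp ((continuous_const.add
                    ((continuous_const.mul hg.continuous).smul
                      continuous_const)).prodMk continuous_const)) _ _
              rw [intervalIntegral.integral_congr_ae hae,
                intervalIntegral.integral_sub hint1
                  ((continuous_const.fun_mul hCqc).intervalIntegrable _ _),
                intervalIntegral.integral_const_mul]
            rw [hfe]
            have h1 := DHP.hasDerivAt_param_integral (fun x => L (x, q1 n 0))
              (hL.comp (contDiff_id.prodMk contDiff_const)) g hg.continuous (q0 n 0) v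
            have h2 : HasDerivAt (fun ε : ℝ => ε * Cq) Cq 0 := hasDerivAt_mul_const Cq
            exact h1.sub h2
          · rw [if_neg hn]
            have hfe : (fun ε : ℝ => ∫ s in (0:ℝ)..1,
                (L (q0 n s + ε • W n s, q1 n s + ε • Z n s)
                  - (p0 n s + ε • ZP n s) (deriv (fun u => q0 n u + ε • W n u) s)
                  + (p1 n s + ε • ZP n s) (deriv (fun u => q1 n u + ε • Z n u) s)))
                = fun _ : ℝ => ∫ s in (0:ℝ)..1,
                    (L (q0 n s, q1 n s) - p0 n s (deriv (q0 n) s)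
                      + p1 n s (deriv (q1 n) s)) := by
              funext ε
              congr 1
              funext s
              simp only [hZ, hZP, hW, if_neg hn, smul_zero, add_zero]
            rw [hfe]
            exact hasDerivAt_const _ _
        rwa [Finset.sum_ite_eq' (Finset.Icc 1 N) m
          (fun _ => (∫ s in (0:ℝ)..1, g s) * (D1 L (q0 m 0) (q1 m 0) v) - Cq),
          if_pos hm] at hsum
      have hfin := hDA.deriv.symm.trans hc
      linarith [hfin]
    refine ContinuousLinearMap.ext fun v => ?_
    have hPC : ContDiff ℝ 1 (fun s => p0 m s v) := (hp0 m).clm_apply contDiff_const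
    have hPd : Continuous (deriv (fun s => p0 m s v)) := hPC.continuous_deriv le_rfl
    have hIBP : ∀ g : ℝ → ℝ, ContDiff ℝ 1 g → g 0 = 0 → g 1 = 0 →
        ∫ s in (0:ℝ)..1, g s * (D1 L (q0 m 0) (q1 m 0) v
          + deriv (fun t => p0 m t v) s) = 0 := by
      intro g hg h0 h1
      have hgd : Continuous (deriv g) := hg.continuous_deriv le_rfl
      have hparts := intervalIntegral.integral_deriv_mul_eq_sub (a := (0:ℝ)) (b := 1)
        (u := g) (v := fun s => p0 m s v) (u' := deriv g) (v' := deriv (fun s => p0 m s v))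
        (fun x _ => (hg.differentiable one_ne_zero x).hasDerivAt)
        (fun x _ => (hPC.differentiable one_ne_zero x).hasDerivAt)
        (hgd.intervalIntegrable _ _) (hPd.intervalIntegrable _ _)
      rw [h0, h1] at hparts
      have hparts' : (∫ s in (0:ℝ)..1, deriv g s * (p0 m s v))
          + ∫ s in (0:ℝ)..1, g s * deriv (fun t => p0 m t v) s = 0 := by
        rw [← intervalIntegral.integral_add
          ((hgd.fun_mul (hPC.continuous)).intervalIntegrable _ _)
          ((hg.continuous.fun_mul hPd).intervalIntegrable _ _)]
        simpa using hparts
      have hkey := key0 v g hg h0 h1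
      have hsplit : ∫ s in (0:ℝ)..1, g s * (D1 L (q0 m 0) (q1 m 0) v
            + deriv (fun t => p0 m t v) s)
          = (∫ s in (0:ℝ)..1, g s * D1 L (q0 m 0) (q1 m 0) v)
            + ∫ s in (0:ℝ)..1, g s * deriv (fun t => p0 m t v) s := by
        rw [← intervalIntegral.integral_add
          ((hg.continuous.fun_mul continuous_const).intervalIntegrable _ _)
          ((hg.continuous.fun_mul hPd).intervalIntegrable _ _)]
        congr 1
        funext s
        ring
      rw [hsplit, intervalIntegral.integral_mul_const, hkey]
      linarith [hparts']
    have hflP := DHP.fl _ (continuous_const.fun_add hPd) hIBP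
    have hFTC := intervalIntegral.integral_deriv_eq_sub (a := (0:ℝ)) (b := 1) (f := fun s => p0 m s v)
      (fun x _ => hPC.differentiable one_ne_zero x)
      (hPd.intervalIntegrable _ _)
    have hintd : (∫ s in (0:ℝ)..1, deriv (fun t => p0 m t v) s)
        = -(D1 L (q0 m 0) (q1 m 0) v) := by
      have hae : ∀ᵐ s : ℝ, s ∈ Ι (0:ℝ) 1 →
          deriv (fun t => p0 m t v) s = -(D1 L (q0 m 0) (q1 m 0) v) := by
        filter_upwards [hne1] with s hs1 hsI
        have := hflP s (hIoo_of s hsI hs1)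
        linarith
      rw [intervalIntegral.integral_congr_ae hae]
      simp
    have hP0 : p0 m 0 v = 0 := by rw [hzero0 m]; rfl
    rw [hintd] at hFTC
    try simp only at hFTC
    rw [hP0] at hFTC
    simp only [ContinuousLinearMap.neg_apply]
    linarith [hFTC]
  -- Step 2': the discrete Legendre transform for p1
  have hLeg1 : ∀ m ∈ Finset.Icc 1 N, p1 m 1 = D2 L (q0 m 0) (q1 m 0) := by
    intro m hm
    have key1 : ∀ (v : Fin d → ℝ) (g : ℝ → ℝ), ContDiff ℝ 1 g → g 0 = 0 → g 1 = 0 →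
        (∫ s in (0:ℝ)..1, g s) * (D2 L (q0 m 0) (q1 m 0) v)
          + (∫ s in (0:ℝ)..1, deriv g s * (p1 m s v)) = 0 := by
      intro v g hg hg0 hg1
      obtain ⟨W, hW⟩ : ∃ F : ℕ → ℝ → (Fin d → ℝ),
          F = fun k s => if k = m then g s • v else 0 := ⟨_, rfl⟩
      have hWc : ∀ n, ContDiff ℝ 1 (W n) := by
        intro n; rw [hW]
        by_cases hn : n = m
        · simp only [if_pos hn]; exact hg.smul contDiff_const
        · simp only [if_neg hn]; exact contDiff_const
      have hc := hcrit Z W ZP ZP hZc hWc hZPc hZPc (fun n => hZP0 n 0) (fun n => hZP0 n 0)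
        (hZ0 1 0)
        (fun n _ _ => by rw [hW, hZ]; by_cases h1 : n = m <;> simp [h1, hg0])
        (by rw [hW]; by_cases h1 : N = m <;> simp [h1, hg0])
      set Cq : ℝ := ∫ s in (0:ℝ)..1, deriv g s * (p1 m s v) with hCqdef
      have hCqc : Continuous fun s => deriv g s * (p1 m s v) :=
        (hg.continuous_deriv le_rfl).mul ((hp1c m).clm_apply continuous_const)
      have hDA : HasDerivAt (fun ε : ℝ =>
          ∑ n ∈ Finset.Icc 1 N, ∫ s in (0:ℝ)..1,
            (L (q0 n s + ε • Z n s, q1 n s + ε • W n s)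
              - (p0 n s + ε • ZP n s) (deriv (fun u => q0 n u + ε • Z n u) s)
              + (p1 n s + ε • ZP n s) (deriv (fun u => q1 n u + ε • W n u) s)))
          ((∫ s in (0:ℝ)..1, g s) * (D2 L (q0 m 0) (q1 m 0) v) + Cq) 0 := by
        have hsum : HasDerivAt (fun ε : ℝ =>
            ∑ n ∈ Finset.Icc 1 N, ∫ s in (0:ℝ)..1,
              (L (q0 n s + ε • Z n s, q1 n s + ε • W n s)
                - (p0 n s + ε • ZP n s) (deriv (fun u => q0 n u + ε • Z n u) s)
                + (p1 n s + ε • ZP n s) (deriv (fun u => q1 n u + ε • W n u) s)))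
            (∑ n ∈ Finset.Icc 1 N, (if n = m then
              (∫ s in (0:ℝ)..1, g s) * (D2 L (q0 m 0) (q1 m 0) v) + Cq else 0)) 0 := by
          apply HasDerivAt.fun_sum
          intro n _
          by_cases hn : n = m
          · subst hn
            rw [if_pos rfl]
            have hfe : (fun ε : ℝ => ∫ s in (0:ℝ)..1,
                (L (q0 n s + ε • Z n s, q1 n s + ε • W n s)
                  - (p0 n s + ε • ZP n s) (deriv (fun u => q0 n u + ε • Z n u) s)
                  + (p1 n s + ε • ZP n s) (deriv (fun u => q1 n u + ε • W n u) s)))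
                = fun ε : ℝ =>
                    (∫ s in (0:ℝ)..1, L (q0 n 0, q1 n 0 + (ε * g s) • v)) + ε * Cq := by
              funext ε
              have hae : ∀ᵐ s : ℝ, s ∈ Ι (0:ℝ) 1 →
                  (L (q0 n s + ε • Z n s, q1 n s + ε • W n s)
                    - (p0 n s + ε • ZP n s) (deriv (fun u => q0 n u + ε • Z n u) s)
                    + (p1 n s + ε • ZP n s) (deriv (fun u => q1 n u + ε • W n u) s))
                  = L (q0 n 0, q1 n 0 + (ε * g s) • v)
                      + ε * (deriv g s * (p1 n s v)) := by
                filter_upwards [hne1] with s hs1 hsI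
                have hsIoo := hIoo_of s hsI hs1
                have hsIcc : s ∈ Set.Icc (0:ℝ) 1 := ⟨hsIoo.1.le, hsIoo.2.le⟩
                simp only [hZ, hZP, hW, if_pos rfl, smul_zero, add_zero]
                have hderW : deriv (fun u => q1 n u + ε • (g u • v)) s
                    = deriv (q1 n) s + (ε * deriv g s) • v := by
                  have h1 : HasDerivAt (fun u => q1 n u + ε • (g u • v))
                      (deriv (q1 n) s + ε • (deriv g s • v)) s :=
                    (hq1da n s).add
                      ((((hg.differentiable one_ne_zero s).hasDerivAt).smul_const v).const_smul ε)
                  rw [h1.deriv, smul_smul]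
                rw [hderW, hconst0 n hm s hsIcc, hconst1 n hm s hsIcc,
                  hder0 n hm s hsIoo, hder1 n hm s hsIoo]
                simp only [zero_add, map_zero, _root_.map_smul, smul_eq_mul, smul_smul]
                ring
              have hint1 : IntervalIntegrable
                  (fun s : ℝ => L (q0 n 0, q1 n 0 + (ε * g s) • v)) volume 0 1 :=
                Continuous.intervalIntegrable
                  (by exact hL.continuous.comp (continuous_const.prodMk
                    (continuous_const.add
                      ((continuous_const.mul hg.continuous).smul continuous_const)))) _ _
              rw [intervalIntegral.integral_congr_ae hae,
                intervalIntegral.integral_add hint1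
                  ((continuous_const.fun_mul hCqc).intervalIntegrable _ _),
                intervalIntegral.integral_const_mul]
            rw [hfe]
            have h1 := DHP.hasDerivAt_param_integral (fun y => L (q0 n 0, y))
              (hL.comp (contDiff_const.prodMk contDiff_id)) g hg.continuous (q1 n 0) v
            have h2 : HasDerivAt (fun ε : ℝ => ε * Cq) Cq 0 := hasDerivAt_mul_const Cq
            exact h1.add h2
          · rw [if_neg hn]
            have hfe : (fun ε : ℝ => ∫ s in (0:ℝ)..1,
                (L (q0 n s + ε • Z n s, q1 n s + ε • W n s)
                  - (p0 n s + ε • ZP n s) (deriv (fun u => q0 n u + ε • Z n u) s)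
                  + (p1 n s + ε • ZP n s) (deriv (fun u => q1 n u + ε • W n u) s)))
                = fun _ : ℝ => ∫ s in (0:ℝ)..1,
                    (L (q0 n s, q1 n s) - p0 n s (deriv (q0 n) s)
                      + p1 n s (deriv (q1 n) s)) := by
              funext ε
              congr 1
              funext s
              simp only [hZ, hZP, hW, if_neg hn, smul_zero, add_zero]
            rw [hfe]
            exact hasDerivAt_const _ _
        rwa [Finset.sum_ite_eq' (Finset.Icc 1 N) m
          (fun _ => (∫ s in (0:ℝ)..1, g s) * (D2 L (q0 m 0) (q1 m 0) v) + Cq),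
          if_pos hm] at hsum
      exact hDA.deriv.symm.trans hc
    refine ContinuousLinearMap.ext fun v => ?_
    have hPC : ContDiff ℝ 1 (fun s => p1 m s v) := (hp1 m).clm_apply contDiff_const
    have hPd : Continuous (deriv (fun s => p1 m s v)) := hPC.continuous_deriv le_rfl
    have hIBP : ∀ g : ℝ → ℝ, ContDiff ℝ 1 g → g 0 = 0 → g 1 = 0 →
        ∫ s in (0:ℝ)..1, g s * (D2 L (q0 m 0) (q1 m 0) v
          - deriv (fun t => p1 m t v) s) = 0 := by
      intro g hg h0 h1
      have hgd : Continuous (deriv g) := hg.continuous_deriv le_rfl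
      have hparts := intervalIntegral.integral_deriv_mul_eq_sub (a := (0:ℝ)) (b := 1)
        (u := g) (v := fun s => p1 m s v) (u' := deriv g) (v' := deriv (fun s => p1 m s v))
        (fun x _ => (hg.differentiable one_ne_zero x).hasDerivAt)
        (fun x _ => (hPC.differentiable one_ne_zero x).hasDerivAt)
        (hgd.intervalIntegrable _ _) (hPd.intervalIntegrable _ _)
      rw [h0, h1] at hparts
      have hparts' : (∫ s in (0:ℝ)..1, deriv g s * (p1 m s v))
          + ∫ s in (0:ℝ)..1, g s * deriv (fun t => p1 m t v) s = 0 := by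
        rw [← intervalIntegral.integral_add
          ((hgd.fun_mul (hPC.continuous)).intervalIntegrable _ _)
          ((hg.continuous.fun_mul hPd).intervalIntegrable _ _)]
        simpa using hparts
      have hkey := key1 v g hg h0 h1
      have hsplit : ∫ s in (0:ℝ)..1, g s * (D2 L (q0 m 0) (q1 m 0) v
            - deriv (fun t => p1 m t v) s)
          = (∫ s in (0:ℝ)..1, g s * D2 L (q0 m 0) (q1 m 0) v)
            - ∫ s in (0:ℝ)..1, g s * deriv (fun t => p1 m t v) s := by
        rw [← intervalIntegral.integral_sub
          ((hg.continuous.fun_mul continuous_const).intervalIntegrable _ _)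
          ((hg.continuous.fun_mul hPd).intervalIntegrable _ _)]
        congr 1
        funext s
        ring
      rw [hsplit, intervalIntegral.integral_mul_const]
      linarith [hparts', hkey]
    have hflP := DHP.fl _ (continuous_const.fun_sub hPd) hIBP
    have hFTC := intervalIntegral.integral_deriv_eq_sub (a := (0:ℝ)) (b := 1)
      (f := fun s => p1 m s v)
      (fun x _ => hPC.differentiable one_ne_zero x)
      (hPd.intervalIntegrable _ _)
    have hintd : (∫ s in (0:ℝ)..1, deriv (fun t => p1 m t v) s)
        = D2 L (q0 m 0) (q1 m 0) v := by
      have hae : ∀ᵐ s : ℝ, s ∈ Ι (0:ℝ) 1 →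
          deriv (fun t => p1 m t v) s = D2 L (q0 m 0) (q1 m 0) v := by
        filter_upwards [hne1] with s hs1 hsI
        have := hflP s (hIoo_of s hsI hs1)
        linarith
      rw [intervalIntegral.integral_congr_ae hae]
      simp
    have hP0 : p1 m 0 v = 0 := by rw [hzero1 m]; rfl
    rw [hintd] at hFTC
    try simp only at hFTC
    rw [hP0] at hFTC
    linarith [hFTC]
  -- Step 3: the discrete Euler--Lagrange equations
  have hDEL : ∀ m, 1 ≤ m → m ≤ N - 1 → ∀ v : Fin d → ℝ,
      D2 L (q0 m 0) (q1 m 0) v + D1 L (q0 (m+1) 0) (q1 (m+1) 0) v = 0 := by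
    intro m hm1 hm2 v
    have hmI : m ∈ Finset.Icc 1 N := Finset.mem_Icc.2 ⟨hm1, by omega⟩
    have hm1I : m + 1 ∈ Finset.Icc 1 N := Finset.mem_Icc.2 ⟨by omega, by omega⟩
    obtain ⟨W1, hW1⟩ : ∃ F : ℕ → ℝ → (Fin d → ℝ),
        F = fun k _ => if k = m then v else 0 := ⟨_, rfl⟩
    obtain ⟨W0, hW0⟩ : ∃ F : ℕ → ℝ → (Fin d → ℝ),
        F = fun k _ => if k = m + 1 then v else 0 := ⟨_, rfl⟩
    have hW1c : ∀ n, ContDiff ℝ 1 (W1 n) := fun n => by rw [hW1]; exact contDiff_const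
    have hW0c : ∀ n, ContDiff ℝ 1 (W0 n) := fun n => by rw [hW0]; exact contDiff_const
    have hc := hcrit W0 W1 ZP ZP hW0c hW1c hZPc hZPc (fun n => hZP0 n 0) (fun n => hZP0 n 0)
      (by rw [hW0]; simp [show ¬ (1 = m + 1) by omega, show m ≠ 0 by omega])
      (fun n _ _ => by
        rw [hW0, hW1]
        by_cases h1 : n = m
        · simp [h1]
        · have h2 : ¬ (n + 1 = m + 1) := by omega
          simp [h1, h2])
      (by rw [hW1]; simp [show ¬ (N = m) by omega])
    have hDA : HasDerivAt (fun ε : ℝ =>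
        ∑ n ∈ Finset.Icc 1 N, ∫ s in (0:ℝ)..1,
          (L (q0 n s + ε • W0 n s, q1 n s + ε • W1 n s)
            - (p0 n s + ε • ZP n s) (deriv (fun u => q0 n u + ε • W0 n u) s)
            + (p1 n s + ε • ZP n s) (deriv (fun u => q1 n u + ε • W1 n u) s)))
        (D2 L (q0 m 0) (q1 m 0) v + D1 L (q0 (m+1) 0) (q1 (m+1) 0) v) 0 := by
      have hsum : HasDerivAt (fun ε : ℝ =>
          ∑ n ∈ Finset.Icc 1 N, ∫ s in (0:ℝ)..1,
            (L (q0 n s + ε • W0 n s, q1 n s + ε • W1 n s)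
              - (p0 n s + ε • ZP n s) (deriv (fun u => q0 n u + ε • W0 n u) s)
              + (p1 n s + ε • ZP n s) (deriv (fun u => q1 n u + ε • W1 n u) s)))
          (∑ n ∈ Finset.Icc 1 N,
            ((if n = m then D2 L (q0 m 0) (q1 m 0) v else 0)
              + (if n = m + 1 then D1 L (q0 (m+1) 0) (q1 (m+1) 0) v else 0))) 0 := by
        apply HasDerivAt.fun_sum
        intro n _
        by_cases hn : n = m
        · rw [if_pos hn, if_neg (by omega : ¬ n = m + 1), add_zero]
          subst hn
          have hfe : (fun ε : ℝ => ∫ s in (0:ℝ)..1,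
              (L (q0 n s + ε • W0 n s, q1 n s + ε • W1 n s)
                - (p0 n s + ε • ZP n s) (deriv (fun u => q0 n u + ε • W0 n u) s)
                + (p1 n s + ε • ZP n s) (deriv (fun u => q1 n u + ε • W1 n u) s)))
              = fun ε : ℝ => L (q0 n 0, q1 n 0 + ε • v) := by
            funext ε
            have hae : ∀ᵐ s : ℝ, s ∈ Ι (0:ℝ) 1 →
                (L (q0 n s + ε • W0 n s, q1 n s + ε • W1 n s)
                  - (p0 n s + ε • ZP n s) (deriv (fun u => q0 n u + ε • W0 n u) s)
                  + (p1 n s + ε • ZP n s) (deriv (fun u => q1 n u + ε • W1 n u) s))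
                = L (q0 n 0, q1 n 0 + ε • v) := by
              filter_upwards [hne1] with s hs1 hsI
              have hsIoo := hIoo_of s hsI hs1
              have hsIcc : s ∈ Set.Icc (0:ℝ) 1 := ⟨hsIoo.1.le, hsIoo.2.le⟩
              simp only [hW0, hW1, hZP, if_pos rfl, if_neg (by omega : ¬ n = n + 1),
                smul_zero, add_zero]
              rw [deriv_add_const, hconst0 n hmI s hsIcc, hconst1 n hmI s hsIcc,
                hder0 n hmI s hsIoo, hder1 n hmI s hsIoo]
              simp
            rw [intervalIntegral.integral_congr_ae hae, intervalIntegral.integral_const]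
            simp
          rw [hfe]
          have hcv : HasDerivAt (fun ε : ℝ => q1 n 0 + ε • v) v 0 := by
            simpa using ((hasDerivAt_id (0:ℝ)).smul_const v).const_add (q1 n 0)
          have hLf : ContDiff ℝ 1 (fun y : Fin d → ℝ => L (q0 n 0, y)) :=
            hL.comp (contDiff_const.prodMk contDiff_id)
          have hfd := (hLf.differentiable one_ne_zero (q1 n 0)).hasFDerivAt
          have h0 : q1 n 0 = q1 n 0 + (0:ℝ) • v := by simp
          rw [h0] at hfd
          have := hfd.comp_hasDerivAt 0 hcv
          simpa [Function.comp_def, D2] using this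
        · by_cases hn' : n = m + 1
          · rw [if_neg hn, if_pos hn', zero_add]
            subst hn'
            have hfe : (fun ε : ℝ => ∫ s in (0:ℝ)..1,
                (L (q0 (m+1) s + ε • W0 (m+1) s, q1 (m+1) s + ε • W1 (m+1) s)
                  - (p0 (m+1) s + ε • ZP (m+1) s)
                      (deriv (fun u => q0 (m+1) u + ε • W0 (m+1) u) s)
                  + (p1 (m+1) s + ε • ZP (m+1) s)
                      (deriv (fun u => q1 (m+1) u + ε • W1 (m+1) u) s)))
                = fun ε : ℝ => L (q0 (m+1) 0 + ε • v, q1 (m+1) 0) := by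
              funext ε
              have hae : ∀ᵐ s : ℝ, s ∈ Ι (0:ℝ) 1 →
                  (L (q0 (m+1) s + ε • W0 (m+1) s, q1 (m+1) s + ε • W1 (m+1) s)
                    - (p0 (m+1) s + ε • ZP (m+1) s)
                        (deriv (fun u => q0 (m+1) u + ε • W0 (m+1) u) s)
                    + (p1 (m+1) s + ε • ZP (m+1) s)
                        (deriv (fun u => q1 (m+1) u + ε • W1 (m+1) u) s))
                  = L (q0 (m+1) 0 + ε • v, q1 (m+1) 0) := by
                filter_upwards [hne1] with s hs1 hsI
                have hsIoo := hIoo_of s hsI hs1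
                have hsIcc : s ∈ Set.Icc (0:ℝ) 1 := ⟨hsIoo.1.le, hsIoo.2.le⟩
                simp only [hW0, hW1, hZP, if_pos rfl, if_neg (by omega : ¬ m + 1 = m),
                  smul_zero, add_zero]
                rw [deriv_add_const, hconst0 (m+1) hm1I s hsIcc, hconst1 (m+1) hm1I s hsIcc,
                  hder0 (m+1) hm1I s hsIoo, hder1 (m+1) hm1I s hsIoo]
                simp
              rw [intervalIntegral.integral_congr_ae hae, intervalIntegral.integral_const]
              simp
            rw [hfe]
            have hcv : HasDerivAt (fun ε : ℝ => q0 (m+1) 0 + ε • v) v 0 := by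
              simpa using ((hasDerivAt_id (0:ℝ)).smul_const v).const_add (q0 (m+1) 0)
            have hLf : ContDiff ℝ 1 (fun x : Fin d → ℝ => L (x, q1 (m+1) 0)) :=
              hL.comp (contDiff_id.prodMk contDiff_const)
            have hfd := (hLf.differentiable one_ne_zero (q0 (m+1) 0)).hasFDerivAt
            have h0 : q0 (m+1) 0 = q0 (m+1) 0 + (0:ℝ) • v := by simp
            rw [h0] at hfd
            have := hfd.comp_hasDerivAt 0 hcv
            simpa [Function.comp_def, D1] using this
          · rw [if_neg hn, if_neg hn', add_zero]
            have hfe : (fun ε : ℝ => ∫ s in (0:ℝ)..1,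
                (L (q0 n s + ε • W0 n s, q1 n s + ε • W1 n s)
                  - (p0 n s + ε • ZP n s) (deriv (fun u => q0 n u + ε • W0 n u) s)
                  + (p1 n s + ε • ZP n s) (deriv (fun u => q1 n u + ε • W1 n u) s)))
                = fun _ : ℝ => ∫ s in (0:ℝ)..1,
                    (L (q0 n s, q1 n s) - p0 n s (deriv (q0 n) s)
                      + p1 n s (deriv (q1 n) s)) := by
              funext ε
              congr 1
              funext s
              simp only [hW0, hW1, hZP, if_neg hn, if_neg hn', smul_zero, add_zero]
            rw [hfe]
            exact hasDerivAt_const _ _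
      rw [Finset.sum_add_distrib, Finset.sum_ite_eq' (Finset.Icc 1 N) m,
        Finset.sum_ite_eq' (Finset.Icc 1 N) (m+1), if_pos hmI, if_pos hm1I] at hsum
      exact hsum
    exact hDA.deriv.symm.trans hc
  -- assemble the conclusion
  refine ⟨⟨?_, hadm0, hadm, hadmN⟩, ?_, ?_⟩
  · intro n h1 h2 s hs
    exact ⟨hconst0 n (Finset.mem_Icc.2 ⟨h1, h2⟩) s hs,
      hconst1 n (Finset.mem_Icc.2 ⟨h1, h2⟩) s hs⟩
  · intro n h1 h2
    exact ⟨hLeg0 n (Finset.mem_Icc.2 ⟨h1, h2⟩), hLeg1 n (Finset.mem_Icc.2 ⟨h1, h2⟩)⟩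
  · intro n h1 h2
    have hnI : n ∈ Finset.Icc 1 N := Finset.mem_Icc.2 ⟨h1, by omega⟩
    have hn1I : n + 1 ∈ Finset.Icc 1 N := Finset.mem_Icc.2 ⟨by omega, by omega⟩
    rw [hLeg1 n hnI, hLeg0 (n+1) hn1I]
    refine ContinuousLinearMap.ext fun v => ?_
    have h := hDEL n h1 h2 v
    simp only [ContinuousLinearMap.neg_apply]
    linarith
end

section
/- Let G = ℝᵈ be a vector space viewed as a manifold and L : G → ℝ be C¹. Define the path-space action on E = {γ = (g, μ) : [0,1] → G × G* C¹ with μ(0) = 0}: S̃(γ) = ∫₀¹ L(g(s)) ds + ∫₀¹ μ(s)·g'(s) ds. Then γ = (g, μ) is a critical point of S̃ with respect to variations (δg, δμ) satisfying δμ(0) = 0 and δg(1) = 0 if and only if g is constant, g(s) ≡ g₀, and μ(s) = s·dL(g₀) for all s ∈ [0,1]; in particular μ(1) = dL(g₀). -/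
open MeasureTheory Set intervalIntegral

private lemma eq_zero_of_integral_sq {w : ℝ → ℝ} (hw : Continuous w)
    (h : ∫ s in (0:ℝ)..1, w s * w s = 0) : ∀ s ∈ Set.Icc (0:ℝ) 1, w s = 0 := by
  have hint : IntegrableOn (fun s => w s * w s) (Set.Ioc (0:ℝ) 1) volume :=
    (hw.mul hw).integrableOn_Ioc
  rw [intervalIntegral.integral_of_le zero_le_one] at h
  have hae0 := (integral_eq_zero_iff_of_nonneg (fun x => mul_self_nonneg (w x)) hint).mp h
  have hae : ∀ᵐ x : ℝ, x ∈ Set.Ioc (0:ℝ) 1 → w x * w x = 0 :=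
    (ae_restrict_iff' measurableSet_Ioc).mp hae0
  intro s hs
  by_contra hne
  have hpos : 0 < w s * w s := mul_self_pos.mpr hne
  have hU : IsOpen ({x | 0 < w x * w x} ∩ Set.Ioo 0 1) :=
    (isOpen_lt continuous_const (hw.mul hw)).inter isOpen_Ioo
  have hs' : s ∈ closure (Set.Ioo (0:ℝ) 1) := by
    rw [closure_Ioo (zero_ne_one)]; exact hs
  obtain ⟨t, htO, htI⟩ := mem_closure_iff.mp hs' _
    (isOpen_lt continuous_const (hw.mul hw)) hpos
  have htmem : t ∈ ({x | 0 < w x * w x} ∩ Set.Ioo 0 1) := ⟨htO, htI⟩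
  obtain ⟨ε, hε, hball⟩ := Metric.isOpen_iff.mp hU t htmem
  rw [Real.ball_eq_Ioo] at hball
  have hsub : Set.Ioo (t - ε) (t + ε) ⊆ {x | ¬(x ∈ Set.Ioc (0:ℝ) 1 → w x * w x = 0)} := by
    intro x hx
    obtain ⟨hx1, hx2⟩ := hball hx
    intro hP
    exact absurd (hP (Set.mem_Ioc_of_Ioo hx2)) (ne_of_gt hx1)
  have hnull := measure_mono_null hsub (ae_iff.mp hae)
  rw [Real.volume_Ioo, ENNReal.ofReal_eq_zero] at hnull
  linarith

private lemma hasDerivAt_primitive {q : ℝ → ℝ} (hq : Continuous q) (a s : ℝ) :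
    HasDerivAt (fun u => ∫ x in a..u, q x) (q s) s :=
  intervalIntegral.integral_hasDerivAt_right (hq.intervalIntegrable a s)
    (hq.stronglyMeasurableAtFilter volume (nhds s)) hq.continuousAt

private lemma contDiff_primitive {q : ℝ → ℝ} (hq : Continuous q) (a : ℝ) :
    ContDiff ℝ 1 (fun u => ∫ x in a..u, q x) := by
  rw [contDiff_one_iff_deriv]
  constructor
  · exact fun s => (hasDerivAt_primitive hq a s).differentiableAt
  · have : deriv (fun u => ∫ x in a..u, q x) = q :=
      funext fun s => (hasDerivAt_primitive hq a s).deriv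
    rw [this]; exact hq

private lemma first_variation {d : ℕ} {L : (Fin d → ℝ) → ℝ} (hL : ContDiff ℝ 1 L)
    {g : ℝ → Fin d → ℝ} {μ : ℝ → (Fin d → ℝ) →L[ℝ] ℝ}
    (hg : ContDiff ℝ 1 g) (hμ : ContDiff ℝ 1 μ)
    {δg : ℝ → Fin d → ℝ} {δμ : ℝ → (Fin d → ℝ) →L[ℝ] ℝ}
    (hδg : ContDiff ℝ 1 δg) (hδμ : ContDiff ℝ 1 δμ) :
    HasDerivAt (fun ε : ℝ =>
        (∫ s in (0:ℝ)..1, L (g s + ε • δg s))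
          + ∫ s in (0:ℝ)..1, (μ s + ε • δμ s) (deriv (fun u => g u + ε • δg u) s))
      ((∫ s in (0:ℝ)..1, fderiv ℝ L (g s) (δg s))
        + ∫ s in (0:ℝ)..1, ((δμ s) (deriv g s) + (μ s) (deriv δg s))) 0 := by
  have hgd : Differentiable ℝ g := hg.differentiable one_ne_zero
  have hδgd : Differentiable ℝ δg := hδg.differentiable one_ne_zero
  have hgc : Continuous g := hg.continuous
  have hδgc : Continuous δg := hδg.continuous
  have hg' : Continuous (deriv g) := hg.continuous_deriv le_rfl
  have hδg' : Continuous (deriv δg) := hδg.continuous_deriv le_rfl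
  have hμc : Continuous μ := hμ.continuous
  have hδμc : Continuous δμ := hδμ.continuous
  have hLd : Differentiable ℝ L := hL.differentiable one_ne_zero
  have hL' : Continuous (fderiv ℝ L) := hL.continuous_fderiv one_ne_zero
  -- the B part is a polynomial in ε
  set b0 : ℝ := ∫ s in (0:ℝ)..1, (μ s) (deriv g s) with hb0
  set b1 : ℝ := ∫ s in (0:ℝ)..1, ((δμ s) (deriv g s) + (μ s) (deriv δg s)) with hb1
  set b2 : ℝ := ∫ s in (0:ℝ)..1, (δμ s) (deriv δg s) with hb2
  have hBeq : ∀ ε : ℝ,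
      (∫ s in (0:ℝ)..1, (μ s + ε • δμ s) (deriv (fun u => g u + ε • δg u) s))
        = b0 + ε * b1 + ε ^ 2 * b2 := by
    intro ε
    have hder : ∀ s : ℝ, deriv (fun u => g u + ε • δg u) s = deriv g s + ε • deriv δg s := by
      intro s
      exact ((hgd s).hasDerivAt.add (((hδgd s).hasDerivAt).const_smul ε)).deriv
    have h1 : (∫ s in (0:ℝ)..1, (μ s + ε • δμ s) (deriv (fun u => g u + ε • δg u) s))
        = ∫ s in (0:ℝ)..1, ((μ s) (deriv g s)
            + ε * ((δμ s) (deriv g s) + (μ s) (deriv δg s))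
            + ε ^ 2 * ((δμ s) (deriv δg s))) := by
      apply intervalIntegral.integral_congr
      intro s _
      show (μ s + ε • δμ s) (deriv (fun u => g u + ε • δg u) s) = _
      rw [hder s]
      simp only [ContinuousLinearMap.add_apply, map_add, ContinuousLinearMap.smul_apply,
        ContinuousLinearMap.map_smul, smul_eq_mul]
      ring
    have i1 : IntervalIntegrable (fun s => (μ s) (deriv g s)) volume 0 1 :=
      (hμc.clm_apply hg').intervalIntegrable 0 1
    have i2 : IntervalIntegrable (fun s => (δμ s) (deriv g s) + (μ s) (deriv δg s)) volume 0 1 :=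
      ((hδμc.clm_apply hg').add (hμc.clm_apply hδg')).intervalIntegrable 0 1
    have i3 : IntervalIntegrable (fun s => (δμ s) (deriv δg s)) volume 0 1 :=
      (hδμc.clm_apply hδg').intervalIntegrable 0 1
    rw [h1, intervalIntegral.integral_add ((i1.add (i2.const_mul ε))) (i3.const_mul (ε ^ 2)),
      intervalIntegral.integral_add i1 (i2.const_mul ε),
      intervalIntegral.integral_const_mul, intervalIntegral.integral_const_mul]
  have hBpoly : HasDerivAt (fun ε : ℝ => b0 + ε * b1 + ε ^ 2 * b2) b1 0 := by
    have h1 : HasDerivAt (fun ε : ℝ => ε * b1) b1 0 := by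
      simpa using (hasDerivAt_id (0:ℝ)).mul_const b1
    have h2 : HasDerivAt (fun ε : ℝ => ε ^ 2 * b2) 0 0 := by
      simpa using (hasDerivAt_pow 2 (0:ℝ)).mul_const b2
    convert (h1.const_add b0).add h2 using 1 <;> first | rfl | simp
  -- the A part : differentiation under the integral sign
  have hA : HasDerivAt (fun ε : ℝ => ∫ s in (0:ℝ)..1, L (g s + ε • δg s))
      (∫ s in (0:ℝ)..1, fderiv ℝ L (g s) (δg s)) 0 := by
    have hF'cont : Continuous fun p : ℝ × ℝ => fderiv ℝ L (g p.2 + p.1 • δg p.2) (δg p.2) :=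
      (hL'.comp ((hgc.comp continuous_snd).add
        (continuous_fst.smul (hδgc.comp continuous_snd)))).clm_apply (hδgc.comp continuous_snd)
    obtain ⟨C, hC⟩ := ((isCompact_closedBall (0:ℝ) 1).prod (isCompact_Icc (a := (0:ℝ)) (b := 1))).exists_bound_of_continuousOn
      hF'cont.continuousOn
    have key := intervalIntegral.hasDerivAt_integral_of_dominated_loc_of_deriv_le
      (F := fun (x : ℝ) (t : ℝ) => L (g t + x • δg t))
      (F' := fun (x : ℝ) (t : ℝ) => fderiv ℝ L (g t + x • δg t) (δg t))
      (x₀ := (0:ℝ)) (a := (0:ℝ)) (b := 1) (μ := volume) (bound := fun _ => C)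
      (s := Metric.ball (0:ℝ) 1) (Metric.ball_mem_nhds (0:ℝ) one_pos)
      (Filter.Eventually.of_forall (fun x =>
        ((hL.continuous.comp (hgc.add ((Continuous.smul (continuous_const (y := x)) hδgc : Continuous fun t => x • δg t))) : Continuous fun t => L (g t + x • δg t)).aestronglyMeasurable)))
      ((hL.continuous.comp (hgc.add ((Continuous.smul (continuous_const (y := (0:ℝ))) hδgc : Continuous fun t => (0:ℝ) • δg t))) : Continuous fun t => L (g t + (0:ℝ) • δg t)).intervalIntegrable 0 1)
      ((hF'cont.comp (Continuous.prodMk_right (0:ℝ))).aestronglyMeasurable)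
      (Filter.Eventually.of_forall (fun t ht x hx => by
        have hmem : ((x, t) : ℝ × ℝ) ∈ Metric.closedBall (0:ℝ) 1 ×ˢ Set.Icc (0:ℝ) 1 := by
          constructor
          · exact Metric.ball_subset_closedBall hx
          · rw [Set.uIoc_of_le (zero_le_one)] at ht
            exact Set.mem_Icc_of_Ioc ht
        exact hC ((x, t)) hmem))
      ((continuous_const.intervalIntegrable 0 1))
      (Filter.Eventually.of_forall (fun t ht x hx => by
        have h1 : HasDerivAt (fun y : ℝ => g t + y • δg t) (δg t) x := by
          simpa using ((hasDerivAt_id x).smul_const (δg t)).const_add (g t)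
        exact (hLd _).hasFDerivAt.comp_hasDerivAt x h1))
    have := key.2
    simpa using this
  have funeq : (fun ε : ℝ =>
        (∫ s in (0:ℝ)..1, L (g s + ε • δg s))
          + ∫ s in (0:ℝ)..1, (μ s + ε • δμ s) (deriv (fun u => g u + ε • δg u) s))
      = fun ε : ℝ => (∫ s in (0:ℝ)..1, L (g s + ε • δg s)) + (b0 + ε * b1 + ε ^ 2 * b2) :=
    funext fun ε => by rw [hBeq ε]
  rw [funeq]
  exact hA.add hBpoly

private lemma deriv_zero_of_const_on {E : Type*} [NormedAddCommGroup E] [NormedSpace ℝ E]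
    {g : ℝ → E} (hgc : ∀ s ∈ Set.Icc (0:ℝ) 1, g s = g 0) :
    ∀ s ∈ Set.Ioo (0:ℝ) 1, deriv g s = 0 := by
  intro s hs
  have hev : g =ᶠ[nhds s] fun _ => g 0 := by
    filter_upwards [isOpen_Ioo.mem_nhds hs] with x hx
    exact hgc x (Set.mem_Icc_of_Ioo hx)
  rw [hev.deriv_eq, deriv_const]

/-- The single-step path-space action S̃(g,μ) = ∫₀¹ L(g(s)) ds + ∫₀¹ μ(s)·g'(s) ds
on paths in T*G ≅ G × G* starting at the zero section: γ = (g,μ) is critical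
(with respect to variations with δμ(0) = 0, δg(1) = 0) iff g is constant and
μ(s) = s·dL(g₀); in particular μ(1) = dL(g₀). -/
theorem path_space_action_critical_iff
    (d : ℕ) (L : (Fin d → ℝ) → ℝ) (hL : ContDiff ℝ 1 L)
    (g : ℝ → Fin d → ℝ) (μ : ℝ → (Fin d → ℝ) →L[ℝ] ℝ)
    (hg : ContDiff ℝ 1 g) (hμ : ContDiff ℝ 1 μ) (hμ0 : μ 0 = 0) :
    (∀ (δg : ℝ → Fin d → ℝ) (δμ : ℝ → (Fin d → ℝ) →L[ℝ] ℝ),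
      ContDiff ℝ 1 δg → ContDiff ℝ 1 δμ → δμ 0 = 0 → δg 1 = 0 →
      deriv (fun ε : ℝ =>
        (∫ s in (0:ℝ)..1, L (g s + ε • δg s))
          + ∫ s in (0:ℝ)..1,
              (μ s + ε • δμ s) (deriv (fun u => g u + ε • δg u) s)) 0 = 0)
    ↔ ((∀ s ∈ Set.Icc (0:ℝ) 1, g s = g 0) ∧
        (∀ s ∈ Set.Icc (0:ℝ) 1, μ s = s • fderiv ℝ L (g 0)) ∧
        μ 1 = fderiv ℝ L (g 0)) := by
  have hg' : Continuous (deriv g) := hg.continuous_deriv le_rfl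
  constructor
  · -- forward direction
    intro H
    have crit : ∀ (δg : ℝ → Fin d → ℝ) (δμ : ℝ → (Fin d → ℝ) →L[ℝ] ℝ),
        ContDiff ℝ 1 δg → ContDiff ℝ 1 δμ → δμ 0 = 0 → δg 1 = 0 →
        (∫ s in (0:ℝ)..1, fderiv ℝ L (g s) (δg s))
          + ∫ s in (0:ℝ)..1, ((δμ s) (deriv g s) + (μ s) (deriv δg s)) = 0 := by
      intro δg δμ h1 h2 h3 h4
      rw [← (first_variation hL hg hμ h1 h2).deriv]
      exact H δg δμ h1 h2 h3 h4
    -- Part (a) : g is constant on [0,1]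
    have hgconst : ∀ s ∈ Set.Icc (0:ℝ) 1, g s = g 1 := by
      have hco : ∀ i : Fin d, ∀ s ∈ Set.Icc (0:ℝ) 1, g s i - g 1 i = 0 := by
        intro i
        set w : ℝ → ℝ := fun s => g s i - g 1 i with hwdef
        have hwc : Continuous w := ((continuous_apply i).comp hg.continuous).sub continuous_const
        set h : ℝ → ℝ := fun s => ∫ u in (0:ℝ)..s, w u with hhdef
        have hhD : ∀ s, HasDerivAt h (w s) s := hasDerivAt_primitive hwc 0
        have hhC : ContDiff ℝ 1 h := contDiff_primitive hwc 0
        have hh0 : h 0 = 0 := intervalIntegral.integral_same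
        have key := crit (fun _ => 0)
          (fun s => h s • ContinuousLinearMap.proj (R := ℝ) (φ := fun _ : Fin d => ℝ) i)
          contDiff_const (hhC.smul contDiff_const)
          (by show h 0 • _ = 0; rw [hh0, zero_smul]) rfl
        have key2 : (∫ s in (0:ℝ)..1, h s * deriv g s i) = 0 := by
          simp only [deriv_const', map_zero, ContinuousLinearMap.smul_apply,
            ContinuousLinearMap.proj_apply, smul_eq_mul, intervalIntegral.integral_zero,
            zero_add, add_zero] at key
          exact key
        have hgi : ∀ s : ℝ, HasDerivAt (fun u => g u i) (deriv g s i) s := by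
          intro s
          have h1 := (hg.differentiable one_ne_zero s).hasDerivAt
          exact (ContinuousLinearMap.proj (R := ℝ) (φ := fun _ : Fin d => ℝ)
            i).hasFDerivAt.comp_hasDerivAt s h1
        have hgic : Continuous fun s : ℝ => g s i := (continuous_apply i).comp hg.continuous
        have hgic' : Continuous fun s : ℝ => deriv g s i := (continuous_apply i).comp hg'
        have ibp := intervalIntegral.integral_mul_deriv_eq_deriv_mul
          (u := h) (u' := w) (v := fun u => g u i) (v' := fun s => deriv g s i)
          (fun x _ => hhD x) (fun x _ => hgi x)
          (hwc.intervalIntegrable 0 1)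
          (hgic'.intervalIntegrable 0 1)
        simp only [hh0, mul_zero, sub_zero, zero_mul] at ibp
        have hh1 : h 1 = ∫ u in (0:ℝ)..1, w u := rfl
        have e3 : (∫ s in (0:ℝ)..1, w s * w s)
            = (∫ s in (0:ℝ)..1, w s * g s i) - (∫ s in (0:ℝ)..1, w s) * g 1 i := by
          have int1 : IntervalIntegrable (fun s : ℝ => w s * g s i) MeasureTheory.volume 0 1 :=
            (hwc.mul hgic).intervalIntegrable 0 1
          have int2 : IntervalIntegrable (fun s : ℝ => w s * g 1 i) MeasureTheory.volume 0 1 :=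
            (hwc.mul continuous_const).intervalIntegrable 0 1
          rw [← intervalIntegral.integral_mul_const,
            ← intervalIntegral.integral_sub int1 int2]
          apply intervalIntegral.integral_congr
          intro x _
          show w x * w x = w x * g x i - w x * g 1 i
          rw [hwdef]; ring
        have hsq : (∫ s in (0:ℝ)..1, w s * w s) = 0 := by
          rw [e3]
          rw [key2, hh1] at ibp
          linarith
        exact eq_zero_of_integral_sq hwc hsq
      intro s hs
      funext i
      have := hco i s hs
      linarith [this]
    have hgc0 : ∀ s ∈ Set.Icc (0:ℝ) 1, g s = g 0 := by
      intro s hs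
      rw [hgconst s hs, ← hgconst 0 ⟨le_refl 0, zero_le_one⟩]
    have hderg0 : ∀ s ∈ Set.Ioo (0:ℝ) 1, deriv g s = 0 := deriv_zero_of_const_on hgc0
    -- Part (b) : μ s = s • fderiv L (g 0) on [0,1]
    have hμs : ∀ i : Fin d, ∀ s ∈ Set.Icc (0:ℝ) 1,
        μ s (Pi.single i 1) = s * fderiv ℝ L (g 0) (Pi.single i 1) := by
      intro i
      set e : Fin d → ℝ := Pi.single i 1 with hedef
      set ai : ℝ := fderiv ℝ L (g 0) e with haidef
      set ν : ℝ → ℝ := fun s => μ s e - s * ai with hνdef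
      have hνc : Continuous ν :=
        (hμ.continuous.clm_apply continuous_const).sub (continuous_id.mul continuous_const)
      set h : ℝ → ℝ := fun s => ∫ u in (1:ℝ)..s, ν u with hhdef
      have hhD : ∀ s, HasDerivAt h (ν s) s := hasDerivAt_primitive hνc 1
      have hhC : ContDiff ℝ 1 h := contDiff_primitive hνc 1
      have hh1 : h 1 = 0 := intervalIntegral.integral_same
      have key := crit (fun s => h s • e) (fun _ => 0)
        (hhC.smul contDiff_const) contDiff_const rfl
        (by show h 1 • e = 0; rw [hh1, zero_smul])
      have hdδg : ∀ s : ℝ, deriv (fun u => h u • e) s = ν s • e :=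
        fun s => ((hhD s).smul_const e).deriv
      simp only [ContinuousLinearMap.zero_apply, zero_add, hdδg,
        ContinuousLinearMap.map_smul, smul_eq_mul] at key
      have e1 : (∫ s in (0:ℝ)..1, h s * fderiv ℝ L (g s) e)
          = ∫ s in (0:ℝ)..1, h s * ai := by
        apply intervalIntegral.integral_congr
        intro x hx
        rw [Set.uIcc_of_le zero_le_one] at hx
        show h x * fderiv ℝ L (g x) e = h x * ai
        rw [hgc0 x hx]
      rw [e1] at key
      have ibp := intervalIntegral.integral_mul_deriv_eq_deriv_mul
        (u := h) (u' := ν) (v := fun s => s) (v' := fun _ => (1:ℝ))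
        (fun x _ => hhD x) (fun x _ => hasDerivAt_id x)
        (hνc.intervalIntegrable 0 1) (continuous_const.intervalIntegrable 0 1)
      simp only [mul_one, hh1, one_mul, zero_mul, mul_zero, sub_zero, zero_sub] at ibp
      -- ibp : ∫ h = - ∫ ν x * x
      have e4 : (∫ s in (0:ℝ)..1, h s * ai) = (∫ s in (0:ℝ)..1, h s) * ai :=
        intervalIntegral.integral_mul_const ai h
      have e5 : (∫ s in (0:ℝ)..1, ν s * ν s)
          = (∫ s in (0:ℝ)..1, ν s * μ s e) - (∫ s in (0:ℝ)..1, ν s * s) * ai := by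
        have hμe : Continuous fun s : ℝ => μ s e := hμ.continuous.clm_apply continuous_const
        have int1 : IntervalIntegrable (fun s : ℝ => ν s * μ s e) MeasureTheory.volume 0 1 :=
          (hνc.mul hμe).intervalIntegrable 0 1
        have int2 : IntervalIntegrable (fun s : ℝ => ν s * s * ai) MeasureTheory.volume 0 1 :=
          ((hνc.mul continuous_id).mul continuous_const).intervalIntegrable 0 1
        rw [← intervalIntegral.integral_mul_const,
          ← intervalIntegral.integral_sub int1 int2]
        apply intervalIntegral.integral_congr
        intro x _
        show ν x * ν x = ν x * μ x e - ν x * x * ai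
        rw [hνdef]; ring
      have hsq : (∫ s in (0:ℝ)..1, ν s * ν s) = 0 := by
        rw [e5]
        rw [e4, ibp] at key
        linarith
      intro s hs
      have := eq_zero_of_integral_sq hνc hsq s hs
      rw [hνdef] at this
      have : μ s e - s * ai = 0 := this
      linarith [this]
    have hμIcc : ∀ s ∈ Set.Icc (0:ℝ) 1, μ s = s • fderiv ℝ L (g 0) := by
      intro s hs
      ext v
      have hv : v = ∑ j, v j • (Pi.single j (1:ℝ) : Fin d → ℝ) := by
        conv_lhs => rw [← Finset.univ_sum_single v]
        refine Finset.sum_congr rfl fun j _ => ?_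
        funext k
        by_cases hk : k = j <;> simp [Pi.single_apply, hk]
      conv_lhs => rw [hv]
      conv_rhs => rw [hv]
      simp only [map_sum, ContinuousLinearMap.map_smul, ContinuousLinearMap.smul_apply,
        smul_eq_mul]
      refine Finset.sum_congr rfl (fun j _ => ?_)
      rw [hμs j s hs]
      ring
    refine ⟨hgc0, hμIcc, ?_⟩
    have := hμIcc 1 ⟨zero_le_one, le_refl 1⟩
    rwa [one_smul] at this
  · -- backward direction
    rintro ⟨hgc, hμc, -⟩
    intro δg δμ hδg hδμ hδμ0 hδg1
    rw [(first_variation hL hg hμ hδg hδμ).deriv]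
    set c := fderiv ℝ L (g 0) with hcdef
    have hδgd : Differentiable ℝ δg := hδg.differentiable one_ne_zero
    have hδg' : Continuous (deriv δg) := hδg.continuous_deriv le_rfl
    have hcd : ∀ s : ℝ, HasDerivAt (fun u => c (δg u)) (c (deriv δg s)) s := fun s =>
      c.hasFDerivAt.comp_hasDerivAt s (hδgd s).hasDerivAt
    have hP : ∀ s : ℝ, HasDerivAt (fun u => u * c (δg u))
        (c (δg s) + s * c (deriv δg s)) s := by
      intro s
      convert (hasDerivAt_id' s).mul (hcd s) using 1 <;> first | rfl | simp
    have hcont1 : Continuous fun s : ℝ => c (δg s) + s * c (deriv δg s) :=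
      (c.continuous.comp hδg.continuous).add
        (continuous_id.mul (c.continuous.comp hδg'))
    have hFTC : (∫ s in (0:ℝ)..1, (c (δg s) + s * c (deriv δg s)))
        = 1 * c (δg 1) - 0 * c (δg 0) :=
      intervalIntegral.integral_eq_sub_of_hasDerivAt (fun x _ => hP x)
        (hcont1.intervalIntegrable 0 1)
    have E1 : (∫ s in (0:ℝ)..1, fderiv ℝ L (g s) (δg s)) = ∫ s in (0:ℝ)..1, c (δg s) := by
      apply intervalIntegral.integral_congr
      intro x hx
      rw [Set.uIcc_of_le zero_le_one] at hx
      show fderiv ℝ L (g x) (δg x) = c (δg x)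
      rw [hgc x hx]
    have hderg0 : ∀ s ∈ Set.Ioo (0:ℝ) 1, deriv g s = 0 := deriv_zero_of_const_on hgc
    have E2 : (∫ s in (0:ℝ)..1, ((δμ s) (deriv g s) + (μ s) (deriv δg s)))
        = ∫ s in (0:ℝ)..1, s * c (deriv δg s) := by
      apply intervalIntegral.integral_congr_ae
      have h1 : ∀ᵐ x : ℝ, x ≠ 1 := by
        have h0 : volume ({(1:ℝ)} : Set ℝ) = 0 := Real.volume_singleton
        have := measure_eq_zero_iff_ae_notMem.mp h0
        filter_upwards [this] with x hx
        simpa using hx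
      filter_upwards [h1] with x hx hxI
      rw [Set.uIoc_of_le zero_le_one] at hxI
      have hxo : x ∈ Set.Ioo (0:ℝ) 1 := ⟨hxI.1, lt_of_le_of_ne hxI.2 hx⟩
      rw [hderg0 x hxo, map_zero, zero_add, hμc x (Set.mem_Icc_of_Ioo hxo)]
      simp [ContinuousLinearMap.smul_apply, smul_eq_mul]
    have hc1 : Continuous fun s : ℝ => c (δg s) := c.continuous.comp hδg.continuous
    have hc2 : Continuous fun s : ℝ => s * c (deriv δg s) :=
      continuous_id.mul (c.continuous.comp hδg')
    rw [E1, E2, ← intervalIntegral.integral_add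
      (hc1.intervalIntegrable 0 1) (hc2.intervalIntegrable 0 1),
      hFTC, hδg1]
    simp
end
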